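/- arXiv:math/0401133 — 4 statements merged into one kernel-verified Lean document; each statement's English description precedes it below -/
import Mathlib

section
/- Let G be a finitely generated group with finitely generated subgroups H_1,…,H_n, for i = 1,…,n let X_i be a nontrivial H_i-almost invariant subset of G, suppose the family is in good position, and let E = E(X_1,…,X_n). Fix a finite generating set of G with word metric d. Then there exists R > 0 such that for all A, B ∈ E with A ≤ B and all g ∈ A, if the ball N_R(g) = {x ∈ G : d(x,g) ≤ R} is contained in A, then g ∈ B. -/
open Pointwise

universe u v

section Defs

variable {G : Type v} [Group G]

/-- `W` is `H`-finite: `W` is contained in the union of finitely many left cosets of `H`. -/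
def HFin (H : Subgroup G) (W : Set G) : Prop :=
  ∃ F : Finset G, W ⊆ (H : Set G) * (F : Set G)

/-- `X` is an `H`-almost invariant subset of `G`: `HX = X` and for every `a : G`
the symmetric difference of `X` and `Xa` is `H`-finite. -/
def AlmostInv (H : Subgroup G) (X : Set G) : Prop :=
  (∀ h ∈ H, h • X = X) ∧
    ∀ a : G, HFin H ((X \ (· * a) '' X) ∪ ((· * a) '' X \ X))

/-- `X` is a nontrivial `H`-almost invariant subset of `G`. -/
def NontrivAI (H : Subgroup G) (X : Set G) : Prop :=
  AlmostInv H X ∧ ¬ HFin H X ∧ ¬ HFin H Xᶜ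

/-- `X ~ Y` : the symmetric difference of `X` and `Y` is `H`-finite. -/
def AIEquiv (H : Subgroup G) (X Y : Set G) : Prop :=
  HFin H ((X \ Y) ∪ (Y \ X))

/-- `H` and `K` are commensurable: `H ⊓ K` has finite index in both `H` and `K`. -/
def CommSub (H K : Subgroup G) : Prop :=
  ((H ⊓ K).subgroupOf H).index ≠ 0 ∧ ((H ⊓ K).subgroupOf K).index ≠ 0

/-- `E(X₁,…,Xₙ)`: the set of all translates of the `Xᵢ` and of their complements. -/
def ESet {ι : Type*} (X : ι → Set G) : Set (Set G) :=
  {A | ∃ (i : ι) (g : G), A = g • X i ∨ A = (g • X i)ᶜ}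

/-- `W` is small with respect to `U ∈ E`: `W` is `gHᵢg⁻¹`-finite, where `U = gXᵢ` or
`U = (gXᵢ)ᶜ` (so that `U` is almost invariant over `gHᵢg⁻¹`). -/
def SmallFor {ι : Type*} (H : ι → Subgroup G) (X : ι → Set G) (U W : Set G) : Prop :=
  ∃ (i : ι) (g : G), (U = g • X i ∨ U = (g • X i)ᶜ) ∧ HFin (H i) (g⁻¹ • W)

/-- Condition (*) (good position): if two of the four corners of a pair of elements
of `E` are small, then one of the four corners is empty. -/
def GoodPos {ι : Type*} (H : ι → Subgroup G) (X : ι → Set G) : Prop :=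
  ∀ U ∈ ESet X, ∀ V ∈ ESet X, ∀ p q : Fin 4, p ≠ q →
    SmallFor H X U (![U ∩ V, U ∩ Vᶜ, Uᶜ ∩ V, Uᶜ ∩ Vᶜ] p) →
    SmallFor H X U (![U ∩ V, U ∩ Vᶜ, Uᶜ ∩ V, Uᶜ ∩ Vᶜ] q) →
    U ∩ V = ∅ ∨ U ∩ Vᶜ = ∅ ∨ Uᶜ ∩ V = ∅ ∨ Uᶜ ∩ Vᶜ = ∅

/-- Almost inclusion: `U ≤ V` iff `U ∩ Vᶜ` is empty or is the only small corner
among the four corners of `(U, V)`. -/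
def LeE {ι : Type*} (H : ι → Subgroup G) (X : ι → Set G) (U V : Set G) : Prop :=
  U ∩ Vᶜ = ∅ ∨
    (SmallFor H X U (U ∩ Vᶜ) ∧ ¬ SmallFor H X U (U ∩ V) ∧
      ¬ SmallFor H X U (Uᶜ ∩ V) ∧ ¬ SmallFor H X U (Uᶜ ∩ Vᶜ))

/-- `E(Y)` for a single almost invariant set. -/
def ESet1 (Y : Set G) : Set (Set G) := ESet (fun _ : Unit => Y)

def SmallFor1 (K : Subgroup G) (Y : Set G) (U W : Set G) : Prop :=
  SmallFor (fun _ : Unit => K) (fun _ : Unit => Y) U W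

def GoodPos1 (K : Subgroup G) (Y : Set G) : Prop :=
  GoodPos (fun _ : Unit => K) (fun _ : Unit => Y)

def LeE1 (K : Subgroup G) (Y : Set G) (U V : Set G) : Prop :=
  LeE (fun _ : Unit => K) (fun _ : Unit => Y) U V

/-- `Y` is invertible: some `g ∈ G` satisfies `gY = Y*`. -/
def InvertibleSet (Y : Set G) : Prop := ∃ g : G, g • Y = Yᶜ

/-- There is a `G`-equivariant bijection `E(Y₁) → E(Y₂)` preserving complementation,
the partial order of almost inclusion, and equivalence classes. -/
def GoodBij (K₁ : Subgroup G) (Y₁ : Set G) (K₂ : Subgroup G) (Y₂ : Set G) : Prop :=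
  ∃ φ : Set G → Set G,
    Set.BijOn φ (ESet1 Y₁) (ESet1 Y₂) ∧
    (∀ (g : G), ∀ U ∈ ESet1 Y₁, φ (g • U) = g • φ U) ∧
    (∀ U ∈ ESet1 Y₁, ∀ V ∈ ESet1 Y₁, LeE1 K₁ Y₁ U V → LeE1 K₂ Y₂ (φ U) (φ V)) ∧
    (∀ U ∈ ESet1 Y₁, φ Uᶜ = (φ U)ᶜ) ∧
    (∀ U ∈ ESet1 Y₁, SmallFor1 K₁ Y₁ U ((U \ φ U) ∪ (φ U \ U)))

/-- `x` lies in the ball of radius `R` about `g` in the word metric determined by `S`. -/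
def InBall (S : Finset G) (R : ℕ) (g x : G) : Prop :=
  ∃ l : List G, (∀ s ∈ l, s ∈ S ∨ s⁻¹ ∈ S) ∧ l.length ≤ R ∧ x = g * l.prod

/-- Some edge of the Cayley graph of `(G,S)` with one endpoint in `A` and the other in
`Aᶜ` has an endpoint in the ball `N_R(g)`. -/
def BNear (S : Finset G) (R : ℕ) (g : G) (A : Set G) : Prop :=
  ∃ x s : G, (s ∈ S ∨ s⁻¹ ∈ S) ∧
    ((x ∈ A ∧ x * s ∉ A) ∨ (x ∉ A ∧ x * s ∈ A)) ∧
    (InBall S R g x ∨ InBall S R g (x * s))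

/-- `E_R* = E − E_R`: the elements of `E` no edge of whose coboundary meets `N_R(g)`. -/
def ERstar (S : Finset G) (R : ℕ) (g : G) {ι : Type*} (X : ι → Set G) : Set (Set G) :=
  {A | A ∈ ESet X ∧ ¬ BNear S R g A}

/-- `U_g = {A ∈ E_R* : g ∈ A}`. -/
def UgSet (S : Finset G) (R : ℕ) (g : G) {ι : Type*} (X : ι → Set G) : Set (Set G) :=
  {A | A ∈ ERstar S R g X ∧ g ∈ A}

/-- `U₁ = U_g ∪ {B ∈ E_R : ∃ A ∈ U_g, A ≤ B}`. -/
def U1Set {ι : Type*} (H : ι → Subgroup G) (S : Finset G) (R : ℕ) (g : G) (X : ι → Set G) :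
    Set (Set G) :=
  UgSet S R g X ∪
    {B | (B ∈ ESet X ∧ BNear S R g B) ∧ ∃ A ∈ UgSet S R g X, LeE H X A B}

/-- `V₁ = E − (U₁ ∪ U₁*)`. -/
def V1Set {ι : Type*} (H : ι → Subgroup G) (S : Finset G) (R : ℕ) (g : G) (X : ι → Set G) :
    Set (Set G) :=
  ESet X \ (U1Set H S R g X ∪ (fun B : Set G => Bᶜ) '' U1Set H S R g X)

/-- `U₂ = U₁ ∪ {A₁} ∪ {B ∈ V₁ : A₁ ≤ B}`. -/
def U2Set {ι : Type*} (H : ι → Subgroup G) (S : Finset G) (R : ℕ) (g : G) (X : ι → Set G)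
    (A₁ : Set G) : Set (Set G) :=
  U1Set H S R g X ∪ {A₁} ∪ {B | B ∈ V1Set H S R g X ∧ LeE H X A₁ B}

/-- `G` is (canonically isomorphic to) the amalgamated free product `A *_C B` of its
subgroups `A` and `B` over `C`, expressed via the universal property of the pushout. -/
def IsAmalgam (C A B : Subgroup G) : Prop :=
  C ≤ A ∧ C ≤ B ∧
    ∀ (P : Type u) [Group P] (f : ↥A →* P) (g : ↥B →* P),
      (∀ (c : G) (hcA : c ∈ A) (hcB : c ∈ B), c ∈ C → f ⟨c, hcA⟩ = g ⟨c, hcB⟩) →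
      ∃! h : G →* P, (∀ (a : G) (ha : a ∈ A), h a = f ⟨a, ha⟩) ∧
        (∀ (b : G) (hb : b ∈ B), h b = g ⟨b, hb⟩)

/-- `G` is (canonically isomorphic to) an HNN extension with associated subgroup `C`:
there are a base subgroup `K`, associated subgroups `C, D ≤ K`, an isomorphism
`φ : C ≃ D` and a stable letter `t` conjugating `C` to `D` via `φ`, such that `G` has
the universal property of the HNN extension. -/
def IsHNNOver (C : Subgroup G) : Prop :=
  ∃ (K D : Subgroup G) (t : G) (φ : ↥C ≃* ↥D),
    C ≤ K ∧ D ≤ K ∧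
    (∀ c : ↥C, t⁻¹ * (c : G) * t = ((φ c : ↥D) : G)) ∧
    ∀ (P : Type u) [Group P] (f : ↥K →* P) (p : P),
      (∀ (c : ↥C) (hc : (c : G) ∈ K) (hc' : ((φ c : ↥D) : G) ∈ K),
        p⁻¹ * f ⟨(c : G), hc⟩ * p = f ⟨((φ c : ↥D) : G), hc'⟩) →
      ∃! h : G →* P, (∀ (k : G) (hk : k ∈ K), h k = f ⟨k, hk⟩) ∧ h t = p

/-- `G` splits over `C`: `G` is an amalgamated free product `A *_C B` in which `C` is a
proper subgroup of both `A` and `B`, or an HNN extension with associated subgroup `C`. -/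
def SplitsOver (C : Subgroup G) : Prop :=
  (∃ A B : Subgroup G, C ≠ A ∧ C ≠ B ∧ IsAmalgam.{u} C A B) ∨ IsHNNOver.{u} C

end Defs

section AuxCN


variable {G : Type*} [Group G]

/-- `s` is a letter (generator or inverse of a generator). -/
def LtrCN (S : Finset G) (s : G) : Prop := s ∈ S ∨ s⁻¹ ∈ S

/-- there is a word of length at most `m` leading from `x` to `y`. -/
def WdCN (S : Finset G) (m : ℕ) (x y : G) : Prop :=
  ∃ l : List G, (∀ s ∈ l, LtrCN S s) ∧ l.length ≤ m ∧ y = x * l.prod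

lemma wd_refl (S : Finset G) (m : ℕ) (x : G) : WdCN S m x x :=
  ⟨[], by simp, by simp, by simp⟩

lemma wd_mono {S : Finset G} {m k : ℕ} (h : m ≤ k) {x y : G} (hw : WdCN S m x y) :
    WdCN S k x y := by
  obtain ⟨l, h1, h2, h3⟩ := hw
  exact ⟨l, h1, h2.trans h, h3⟩

lemma wd_trans {S : Finset G} {m k : ℕ} {x y z : G} (h1 : WdCN S m x y) (h2 : WdCN S k y z) :
    WdCN S (m + k) x z := by
  obtain ⟨l1, a1, b1, c1⟩ := h1
  obtain ⟨l2, a2, b2, c2⟩ := h2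
  refine ⟨l1 ++ l2, ?_, ?_, ?_⟩
  · intro s hs
    rcases List.mem_append.1 hs with h | h
    exacts [a1 s h, a2 s h]
  · simpa using Nat.add_le_add b1 b2
  · simp [c2, c1, List.prod_append, mul_assoc]

lemma wd_translate {S : Finset G} {m : ℕ} {x y : G} (g : G) (h : WdCN S m x y) :
    WdCN S m (g * x) (g * y) := by
  obtain ⟨l, a, b, c⟩ := h
  exact ⟨l, a, b, by rw [c, mul_assoc]⟩

lemma prod_inv_rev (l : List G) : ((l.map (fun s => s⁻¹)).reverse).prod = l.prod⁻¹ := by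
  induction l with
  | nil => simp
  | cons s t ih => simp [ih, mul_inv_rev]

lemma wd_symm {S : Finset G} {m : ℕ} {x y : G} (h : WdCN S m x y) : WdCN S m y x := by
  obtain ⟨l, a, b, c⟩ := h
  refine ⟨(l.map (fun s => s⁻¹)).reverse, ?_, by simpa using b, ?_⟩
  · intro s hs
    rw [List.mem_reverse, List.mem_map] at hs
    obtain ⟨t, ht, rfl⟩ := hs
    rcases a t ht with h' | h'
    · exact Or.inr (by simpa using h')
    · exact Or.inl h'
  · rw [prod_inv_rev, c]
    group

lemma wd_inv {S : Finset G} {m : ℕ} {w : G} (h : WdCN S m 1 w) : WdCN S m 1 w⁻¹ := by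
  have h2 := wd_translate w⁻¹ (wd_symm h)
  simpa using h2

/-- `p` is a crossing vertex of `W`. -/
def CrsCN (S : Finset G) (W : Set G) (p : G) : Prop :=
  ∃ s, LtrCN S s ∧ ¬ (p ∈ W ↔ p * s ∈ W)

lemma crs_compl {S : Finset G} {W : Set G} {p : G} : CrsCN S Wᶜ p ↔ CrsCN S W p := by
  unfold CrsCN
  constructor <;>
  · rintro ⟨s, hs, h⟩
    exact ⟨s, hs, by simp only [Set.mem_compl_iff] at h ⊢; tauto⟩

lemma crs_smul {S : Finset G} {W : Set G} {b p : G} :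
    CrsCN S (b • W) p ↔ CrsCN S W (b⁻¹ * p) := by
  unfold CrsCN
  have hmem : ∀ q : G, q ∈ b • W ↔ b⁻¹ * q ∈ W := by
    intro q
    rw [Set.mem_smul_set_iff_inv_smul_mem, smul_eq_mul]
  constructor <;>
  · rintro ⟨s, hs, h⟩
    refine ⟨s, hs, ?_⟩
    rw [hmem p, hmem (p * s), mul_assoc] at * <;> tauto

/-- membership is constant along a word avoiding crossing vertices. -/
lemma memb_const {S : Finset G} {W : Set G} :
    ∀ l : List G, (∀ s ∈ l, LtrCN S s) → ∀ x : G,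
      (∀ k, k < l.length → ¬ CrsCN S W (x * (l.take k).prod)) →
      (x ∈ W ↔ x * l.prod ∈ W) := by
  intro l
  induction l with
  | nil => intro _ x _; simp
  | cons s t ih =>
    intro hl x hk
    have h0 : ¬ CrsCN S W x := by
      have := hk 0 (by simp)
      simpa using this
    have hxs : x ∈ W ↔ x * s ∈ W := by
      by_contra hco
      exact h0 ⟨s, hl s (by simp), hco⟩
    have ht : x * s ∈ W ↔ (x * s) * t.prod ∈ W := by
      refine ih (fun u hu => hl u (by simp [hu])) (x * s) ?_
      intro k hkl
      have := hk (k + 1) (by simpa using Nat.succ_lt_succ hkl)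
      simpa [List.take_succ_cons, mul_assoc] using this
    rw [List.prod_cons, ← mul_assoc]
    exact hxs.trans ht

/-- walk from `x ∈ W` towards the complement, staying in `W`, reaching a crossing
vertex of `W` inside `W`, without changing `V`-membership (provided crossing vertices
of `V` avoid `W`). -/
lemma walk_bdry {S : Finset G} {W V : Set G} (hV : ∀ p, CrsCN S V p → p ∉ W) :
    ∀ l : List G, (∀ s ∈ l, LtrCN S s) → ∀ x, x ∈ W → x * l.prod ∉ W →
      ∃ p, p ∈ W ∧ CrsCN S W p ∧ (x ∈ V ↔ p ∈ V) := by
  intro l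
  induction l with
  | nil => intro _ x hx hx'; simp at hx'; exact absurd hx hx'
  | cons s t ih =>
    intro hl x hx hx'
    by_cases hxs : x * s ∈ W
    · obtain ⟨p, h1, h2, h3⟩ := ih (fun u hu => hl u (by simp [hu])) (x * s) hxs
        (by rw [List.prod_cons, ← mul_assoc] at hx'; exact hx')
      refine ⟨p, h1, h2, ?_⟩
      have : x ∈ V ↔ x * s ∈ V := by
        by_contra hco
        exact hV x ⟨s, hl s (by simp), hco⟩ hx
      exact this.trans h3
    · exact ⟨x, hx, ⟨s, hl s (by simp), by tauto⟩, Iff.rfl⟩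

/-- every element of a subgroup is a product of generators and inverses. -/
lemma exists_word {K : Subgroup G} {T : Finset G} (hT : Subgroup.closure (T : Set G) = K)
    {k : G} (hk : k ∈ K) :
    ∃ l : List G, (∀ s ∈ l, s ∈ T ∨ s⁻¹ ∈ T) ∧ l.prod = k := by
  rw [← hT] at hk
  induction hk using Subgroup.closure_induction with
  | mem x hx => exact ⟨[x], by simpa using Or.inl hx, by simp⟩
  | one => exact ⟨[], by simp, by simp⟩
  | mul x y hx hy ihx ihy =>
    obtain ⟨l1, a1, b1⟩ := ihx
    obtain ⟨l2, a2, b2⟩ := ihy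
    refine ⟨l1 ++ l2, ?_, by simp [List.prod_append, b1, b2]⟩
    intro s hs
    rcases List.mem_append.1 hs with h | h
    exacts [a1 s h, a2 s h]
  | inv x hx ihx =>
    obtain ⟨l, a, b⟩ := ihx
    refine ⟨(l.map (fun s => s⁻¹)).reverse, ?_, by rw [prod_inv_rev, b]⟩
    intro s hs
    rw [List.mem_reverse, List.mem_map] at hs
    obtain ⟨t, ht, rfl⟩ := hs
    rcases a t ht with h' | h'
    · exact Or.inr (by simpa using h')
    · exact Or.inl h'

/-- ball as a finset -/
noncomputable def PBall (S : Finset G) (m : ℕ) : Finset G :=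
  letI := Classical.decEq G
  (insert (1 : G) (S ∪ S.image (fun s => s⁻¹))) ^ m

lemma one_mem_PBall (S : Finset G) : ∀ m : ℕ, (1 : G) ∈ PBall S m := by
  letI := Classical.decEq G
  intro m
  induction m with
  | zero => unfold PBall; simp
  | succ m ih =>
    unfold PBall at ih ⊢
    rw [pow_succ]
    simpa using Finset.mul_mem_mul ih (Finset.mem_insert_self (1:G) _)

lemma prod_mem_PBall {S : Finset G} :
    ∀ (m : ℕ) (l : List G), (∀ s ∈ l, LtrCN S s) → l.length ≤ m → l.prod ∈ PBall S m := by
  letI := Classical.decEq G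
  intro m
  induction m with
  | zero =>
    intro l _ hlen
    rw [Nat.le_zero, List.length_eq_zero_iff] at hlen
    subst hlen
    simp [PBall]
  | succ m ih =>
    intro l hl hlen
    match l with
    | [] =>
      simpa using one_mem_PBall S (m+1)
    | s :: t =>
      have hs : s ∈ insert (1 : G) (S ∪ S.image (fun s => s⁻¹)) := by
        rcases hl s (by simp) with h | h
        · exact Finset.mem_insert_of_mem (Finset.mem_union_left _ h)
        · refine Finset.mem_insert_of_mem (Finset.mem_union_right _ ?_)
          exact Finset.mem_image.2 ⟨s⁻¹, h, by simp⟩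
      have ht : t.prod ∈ PBall S m :=
        ih t (fun u hu => hl u (by simp [hu])) (by simpa using Nat.le_of_succ_le_succ hlen)
      unfold PBall at ht ⊢
      rw [pow_succ', List.prod_cons]
      exact Finset.mul_mem_mul hs ht

lemma mem_PBall {S : Finset G} {m : ℕ} {w : G} (h : WdCN S m 1 w) : w ∈ PBall S m := by
  obtain ⟨l, a, b, c⟩ := h
  rw [c, one_mul]
  exact prod_mem_PBall m l a b


/-- `H`-finite sets: basic lemmas. -/
lemma hfin_empty (H : Subgroup G) : HFin H (∅ : Set G) := ⟨∅, by simp⟩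

lemma not_hfin_nonempty {H : Subgroup G} {W : Set G} (h : ¬ HFin H W) : W.Nonempty := by
  rcases Set.eq_empty_or_nonempty W with rfl | hne
  · exact absurd (hfin_empty H) h
  · exact hne

lemma hfin_smul {H : Subgroup G} {W : Set G} {h : G} (hh : h ∈ H) (hf : HFin H W) :
    HFin H (h • W) := by
  obtain ⟨F, hF⟩ := hf
  refine ⟨F, ?_⟩
  rintro x ⟨w, hw, rfl⟩
  obtain ⟨h2, hh2, f, hfm, rfl⟩ := Set.mem_mul.1 (hF hw)
  exact Set.mem_mul.2 ⟨h * h2, mul_mem hh hh2, f, hfm, by simp [smul_eq_mul, mul_assoc]⟩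

lemma smul_set_compl (g : G) (A : Set G) : g • Aᶜ = (g • A)ᶜ := by
  ext x
  simp [Set.mem_smul_set_iff_inv_smul_mem]

lemma smul_set_inter' (g : G) (A B : Set G) : g • (A ∩ B) = (g • A) ∩ (g • B) := by
  ext x
  simp [Set.mem_smul_set_iff_inv_smul_mem]

/-- the `Bool`-signed version of the family. -/
def XbCN {ι : Type*} (X : ι → Set G) (i : ι) (e : Bool) : Set G :=
  if e then X i else (X i)ᶜ

end AuxCN

/-- There is `R > 0` such that whenever `A ≤ B` in `E` and the ball of radius `R`
about `g` is contained in `A`, then `g ∈ B`. -/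
theorem containment_neighbourhood
    {G : Type*} [Group G] {n : ℕ} (S : Finset G)
    (hS : Subgroup.closure (S : Set G) = ⊤)
    (H : Fin n → Subgroup G) (hfg : ∀ i, (H i).FG)
    (X : Fin n → Set G) (hnt : ∀ i, NontrivAI (H i) (X i))
    (hgp : GoodPos H X) :
    ∃ R : ℕ, 0 < R ∧ ∀ A ∈ ESet X, ∀ B ∈ ESet X, LeE H X A B →
      ∀ g ∈ A, {x : G | InBall S R g x} ⊆ A → g ∈ B := by
  classical
  -- words for all group elements
  have hword : ∀ g : G, ∃ l : List G, (∀ s ∈ l, LtrCN S s) ∧ l.prod = g := by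
    intro g
    exact exists_word hS (Subgroup.mem_top g)
  choose wl hwl1 hwl2 using hword
  have hwd : ∀ g : G, WdCN S ((wl g).length) 1 g :=
    fun g => ⟨wl g, hwl1 g, le_refl _, by rw [hwl2 g, one_mul]⟩
  -- wall data
  have hΦ0 : ∀ (j : Fin n) (s : G),
      ∃ F : Finset G, ((X j \ (· * s) '' X j) ∪ ((· * s) '' X j \ X j)) ⊆
        (H j : Set G) * (F : Set G) := fun j s => (hnt j).1.2 s
  choose Φ hΦ using hΦ0
  set T : Finset G := S ∪ S.image (fun s => s⁻¹) with hT
  have hltrT : ∀ s : G, LtrCN S s → s ∈ T := by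
    intro s hs
    rcases hs with h | h
    · exact Finset.mem_union_left _ h
    · exact Finset.mem_union_right _ (Finset.mem_image.2 ⟨s⁻¹, h, by simp⟩)
  set WallF : Fin n → Finset G :=
    fun j => T.biUnion (fun s => (Φ j s).image (fun φ => φ * s⁻¹)) with hWallF
  have wall_lem : ∀ (j : Fin n) (p : G), CrsCN S (X j) p →
      ∃ h ∈ H j, ∃ ψ ∈ WallF j, p = h * ψ := by
    intro j p hcrs
    obtain ⟨s, hs, hiff⟩ := hcrs
    have hmem : p * s ∈ (H j : Set G) * (Φ j s : Set G) := by
      by_cases hp : p ∈ X j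
      · have hps : p * s ∉ X j := by tauto
        exact hΦ j s (Or.inr ⟨⟨p, hp, rfl⟩, hps⟩)
      · have hps : p * s ∈ X j := by tauto
        refine hΦ j s (Or.inl ⟨hps, ?_⟩)
        rintro ⟨x, hx, hxe⟩
        have : x = p := by
          have := mul_right_cancel (a := x) (b := s) (c := p) hxe
          exact this
        exact hp (this ▸ hx)
    obtain ⟨h, hh, φ, hφ, heq⟩ := Set.mem_mul.1 hmem
    refine ⟨h, hh, φ * s⁻¹, ?_, ?_⟩
    · exact Finset.mem_biUnion.2 ⟨s, hltrT s hs, Finset.mem_image.2 ⟨φ, hφ, rfl⟩⟩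
    · have : p * s = h * φ := heq.symm
      calc p = p * s * s⁻¹ := by group
        _ = h * φ * s⁻¹ := by rw [this]
        _ = h * (φ * s⁻¹) := by rw [mul_assoc]
  -- generators of the H i
  have hTg0 : ∀ i : Fin n, ∃ Tr : Finset G, Subgroup.closure (Tr : Set G) = H i := hfg
  choose Tg hTg using hTg0
  -- boundary elements
  have hbdry : ∀ i : Fin n, ∃ c s : G, LtrCN S s ∧ c ∈ X i ∧ c * s ∉ X i := by
    intro i
    obtain ⟨x0, hx0⟩ : (X i).Nonempty := not_hfin_nonempty (hnt i).2.1
    obtain ⟨y0, hy0⟩ : ((X i)ᶜ).Nonempty := not_hfin_nonempty (hnt i).2.2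
    have hxy : x0 * (wl (x0⁻¹ * y0)).prod = y0 := by rw [hwl2]; group
    obtain ⟨p, hp1, hp2, -⟩ := walk_bdry (V := (∅ : Set G))
      (by rintro p ⟨s, _, hs⟩; simp at hs) (wl (x0⁻¹ * y0)) (hwl1 _) x0 hx0
      (by rw [hxy]; exact hy0)
    obtain ⟨s, hs, hiff⟩ := hp2
    refine ⟨p, s, hs, hp1, ?_⟩
    tauto
  choose cc st hst hcc hccs using hbdry
  -- numeric constants
  set LΨ : ℕ := Finset.univ.sup (fun j : Fin n => (WallF j).sup (fun ψ => (wl ψ).length))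
  set LT : ℕ := Finset.univ.sup (fun i : Fin n => (Tg i).sup (fun t => (wl t).length))
  set Lc : ℕ := Finset.univ.sup
    (fun i : Fin n => max ((wl (cc i)).length) ((wl (cc i * st i)).length))
  set Λ : ℕ := LΨ + LT + Lc + 1 with hΛ
  set ρ : ℕ := 4 * Λ + 4 with hρ
  -- bounds
  have bndψ : ∀ (j : Fin n), ∀ ψ ∈ WallF j, WdCN S Λ 1 ψ := by
    intro j ψ hψ
    refine wd_mono ?_ (hwd ψ)
    calc (wl ψ).length ≤ (WallF j).sup (fun ψ => (wl ψ).length) :=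
          Finset.le_sup (f := fun ψ => (wl ψ).length) hψ
      _ ≤ LΨ := Finset.le_sup (f := fun j : Fin n => (WallF j).sup (fun ψ => (wl ψ).length))
          (Finset.mem_univ j)
      _ ≤ Λ := by omega
  have bndT : ∀ (i : Fin n) (t : G), (t ∈ Tg i ∨ t⁻¹ ∈ Tg i) → WdCN S Λ 1 t := by
    intro i t ht
    have hb : ∀ u ∈ Tg i, (wl u).length ≤ Λ := by
      intro u hu
      calc (wl u).length ≤ (Tg i).sup (fun t => (wl t).length) :=
            Finset.le_sup (f := fun t => (wl t).length) hu
        _ ≤ LT := Finset.le_sup (f := fun i : Fin n => (Tg i).sup (fun t => (wl t).length))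
            (Finset.mem_univ i)
        _ ≤ Λ := by omega
    rcases ht with h | h
    · exact wd_mono (hb t h) (hwd t)
    · simpa using wd_inv (wd_mono (hb t⁻¹ h) (hwd t⁻¹))
  have bndc : ∀ i : Fin n, WdCN S Lc 1 (cc i) ∧ WdCN S Lc 1 (cc i * st i) := by
    intro i
    constructor
    · refine wd_mono ?_ (hwd _)
      calc (wl (cc i)).length ≤ max ((wl (cc i)).length) ((wl (cc i * st i)).length) :=
            le_max_left _ _
        _ ≤ Lc := Finset.le_sup
            (f := fun i : Fin n => max ((wl (cc i)).length) ((wl (cc i * st i)).length))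
            (Finset.mem_univ i)
    · refine wd_mono ?_ (hwd _)
      calc (wl (cc i * st i)).length
            ≤ max ((wl (cc i)).length) ((wl (cc i * st i)).length) := le_max_right _ _
        _ ≤ Lc := Finset.le_sup
            (f := fun i : Fin n => max ((wl (cc i)).length) ((wl (cc i * st i)).length))
            (Finset.mem_univ i)
  -- invariance
  have hinvb : ∀ (k : Fin n) (e : Bool) (h : G), h ∈ H k → h • XbCN X k e = XbCN X k e := by
    intro k e h hh
    cases e
    · show h • (X k)ᶜ = (X k)ᶜ
      rw [smul_set_compl, (hnt k).1.1 h hh]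
    · exact (hnt k).1.1 h hh
  have crsXb : ∀ (k : Fin n) (e : Bool) (p : G), CrsCN S (XbCN X k e) p ↔ CrsCN S (X k) p := by
    intro k e p
    cases e
    · exact crs_compl
    · exact Iff.rfl
  -- uniform bound for close corners
  have Nspec : ∀ (i : Fin n) (e : Bool) (j : Fin n) (f : Bool) (u : G),
      ∃ N : ℕ, ∀ _ : HFin (H i) (XbCN X i e ∩ (u • XbCN X j f)ᶜ),
        ∀ z ∈ XbCN X i e ∩ (u • XbCN X j f)ᶜ, ∃ y, WdCN S N z y ∧ y ∉ XbCN X i e := by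
    intro i e j f u
    by_cases hfin : HFin (H i) (XbCN X i e ∩ (u • XbCN X j f)ᶜ)
    · obtain ⟨F, hF⟩ := hfin
      refine ⟨F.sup (fun x => (wl x⁻¹).length) + Lc, fun _ z hz => ?_⟩
      obtain ⟨h1, hh1, fel, hfel, heq⟩ := Set.mem_mul.1 (hF hz)
      -- z = h1 * fel
      have hz1 : z * fel⁻¹ = h1 := by rw [← heq]; group
      have w1 : WdCN S (F.sup (fun x => (wl x⁻¹).length)) z h1 := by
        rw [← hz1]
        have := wd_translate z (wd_mono (Finset.le_sup (f := fun x => (wl x⁻¹).length) hfel)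
          (hwd fel⁻¹))
        simpa using this
      cases e
      · -- e = false : XbCN = (X i)ᶜ, escape to X i via cc i
        refine ⟨h1 * cc i, ?_, ?_⟩
        · have w2 : WdCN S Lc h1 (h1 * cc i) := by
            simpa using wd_translate h1 (bndc i).1
          exact wd_trans w1 w2
        · show ¬ h1 * cc i ∈ XbCN X i false
          have hinv : h1 • X i = X i := by simpa [XbCN] using hinvb i true h1 hh1
          have : h1 * cc i ∈ X i := by
            rw [← hinv]
            exact ⟨cc i, hcc i, rfl⟩
          simpa [XbCN] using this
      · -- e = true : escape to (X i)ᶜ via cc i * st i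
        refine ⟨h1 * (cc i * st i), ?_, ?_⟩
        · have w2 : WdCN S Lc h1 (h1 * (cc i * st i)) := by
            simpa using wd_translate h1 (bndc i).2
          exact wd_trans w1 w2
        · show ¬ h1 * (cc i * st i) ∈ XbCN X i true
          have hinv : h1 • (X i)ᶜ = (X i)ᶜ := by simpa [XbCN] using hinvb i false h1 hh1
          have : h1 * (cc i * st i) ∈ (X i)ᶜ := by
            rw [← hinv]
            exact ⟨cc i * st i, hccs i, rfl⟩
          simpa [XbCN] using this
    · exact ⟨0, fun hf => absurd hf hfin⟩
  choose NN hNN using Nspec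
  obtain ⟨ν, hνbnd⟩ : ∃ ν : ℕ, ∀ (i : Fin n) (e : Bool) (j : Fin n) (f : Bool),
      ∀ u ∈ PBall S ρ, NN i e j f u ≤ ν := by
    refine ⟨Finset.univ.sup (fun i : Fin n => Finset.univ.sup (fun j : Fin n =>
      (PBall S ρ).sup (fun u => max (max (NN i true j true u) (NN i true j false u))
        (max (NN i false j true u) (NN i false j false u))))), ?_⟩
    intro i e j f u hu
    have h1 : NN i e j f u ≤ max (max (NN i true j true u) (NN i true j false u))
        (max (NN i false j true u) (NN i false j false u)) := by
      cases e <;> cases f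
      · exact le_max_of_le_right (le_max_right _ _)
      · exact le_max_of_le_right (le_max_left _ _)
      · exact le_max_of_le_left (le_max_right _ _)
      · exact le_max_of_le_left (le_max_left _ _)
    have h2 : max (max (NN i true j true u) (NN i true j false u))
        (max (NN i false j true u) (NN i false j false u)) ≤
        (PBall S ρ).sup (fun u => max (max (NN i true j true u) (NN i true j false u))
          (max (NN i false j true u) (NN i false j false u))) :=
      Finset.le_sup (f := fun u => max (max (NN i true j true u) (NN i true j false u))
        (max (NN i false j true u) (NN i false j false u))) hu
    have h3 : (PBall S ρ).sup (fun u => max (max (NN i true j true u) (NN i true j false u))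
          (max (NN i false j true u) (NN i false j false u))) ≤
        Finset.univ.sup (fun j : Fin n =>
          (PBall S ρ).sup (fun u => max (max (NN i true j true u) (NN i true j false u))
            (max (NN i false j true u) (NN i false j false u)))) :=
      Finset.le_sup (f := fun j : Fin n =>
        (PBall S ρ).sup (fun u => max (max (NN i true j true u) (NN i true j false u))
          (max (NN i false j true u) (NN i false j false u)))) (Finset.mem_univ j)
    have h4 := Finset.le_sup (f := fun i : Fin n => Finset.univ.sup (fun j : Fin n =>
      (PBall S ρ).sup (fun u => max (max (NN i true j true u) (NN i true j false u))
        (max (NN i false j true u) (NN i false j false u))))) (Finset.mem_univ i)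
    exact ((h1.trans h2).trans h3).trans h4
  refine ⟨ν + 1, Nat.succ_pos _, ?_⟩
  intro A hA B hB hle g hgA hball
  by_contra hgB
  rcases hle with hempty | ⟨hsm, hn1, hn2, hn3⟩
  · have : g ∈ A ∩ Bᶜ := ⟨hgA, hgB⟩
    rw [hempty] at this
    exact this
  obtain ⟨i, a, hrepA, hfinc⟩ := hsm
  obtain ⟨j, b, hrepB⟩ := hB
  -- boolean normal forms
  obtain ⟨eA, hXA⟩ : ∃ e : Bool, A = a • XbCN X i e := by
    rcases hrepA with h | h
    · exact ⟨true, h⟩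
    · exact ⟨false, by rw [h, show XbCN X i false = (X i)ᶜ from rfl, smul_set_compl]⟩
  obtain ⟨eB, hXB⟩ : ∃ e : Bool, B = b • XbCN X j e := by
    rcases hrepB with h | h
    · exact ⟨true, h⟩
    · exact ⟨false, by rw [h, show XbCN X j false = (X j)ᶜ from rfl, smul_set_compl]⟩
  set X0 : Set G := XbCN X i eA with hX0
  set b' : G := a⁻¹ * b with hb'
  set B' : Set G := b' • XbCN X j eB with hB'
  set g' : G := a⁻¹ * g with hg'
  have haA : a⁻¹ • A = X0 := by rw [hXA, inv_smul_smul]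
  have haB : a⁻¹ • B = B' := by rw [hXB, smul_smul, hB', hb']
  have hg'X0 : g' ∈ X0 := by
    rw [← haA]
    exact ⟨g, hgA, rfl⟩
  have hg'B' : g' ∉ B' := by
    rw [← haB]
    rintro ⟨x, hx, hxe⟩
    have hxg : x = g := by
      have h2 : a⁻¹ * x = a⁻¹ * g := by simpa [smul_eq_mul, hg'] using hxe
      exact mul_left_cancel h2
    exact hgB (hxg ▸ hx)
  -- normalized smallness conditions
  have hnorm : ∀ W1 W2 : Set G, a⁻¹ • (W1 ∩ W2) = (a⁻¹ • W1) ∩ (a⁻¹ • W2) :=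
    fun W1 W2 => smul_set_inter' a⁻¹ W1 W2
  have hC : HFin (H i) (X0 ∩ B'ᶜ) := by
    have : a⁻¹ • (A ∩ Bᶜ) = X0 ∩ B'ᶜ := by
      rw [hnorm, haA, smul_set_compl, haB]
    rwa [this] at hfinc
  have hne1 : ¬ HFin (H i) (X0 ∩ B') := by
    intro hcon
    refine hn1 ⟨i, a, hrepA, ?_⟩
    have : a⁻¹ • (A ∩ B) = X0 ∩ B' := by rw [hnorm, haA, haB]
    rwa [this]
  have hne2 : ¬ HFin (H i) (X0ᶜ ∩ B') := by
    intro hcon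
    refine hn2 ⟨i, a, hrepA, ?_⟩
    have : a⁻¹ • (Aᶜ ∩ B) = X0ᶜ ∩ B' := by rw [hnorm, smul_set_compl, haA, haB]
    rwa [this]
  have hne3 : ¬ HFin (H i) (X0ᶜ ∩ B'ᶜ) := by
    intro hcon
    refine hn3 ⟨i, a, hrepA, ?_⟩
    have : a⁻¹ • (Aᶜ ∩ Bᶜ) = X0ᶜ ∩ B'ᶜ := by
      rw [hnorm, smul_set_compl, haA, smul_set_compl, haB]
    rwa [this]
  -- translated ball condition
  have hball' : ∀ x : G, WdCN S (ν + 1) g' x → x ∈ X0 := by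
    intro x hx
    obtain ⟨l, hl, hlen, hxe⟩ := hx
    have hin : g * l.prod ∈ A := hball ⟨l, hl, hlen, rfl⟩
    rw [← haA]
    refine ⟨g * l.prod, hin, ?_⟩
    rw [hxe, hg']
    simp [smul_eq_mul, mul_assoc]
  -- crossing structure
  have crsX0wall : ∀ p, CrsCN S X0 p → ∃ h ∈ H i, ∃ ψ ∈ WallF i, p = h * ψ := by
    intro p hp
    exact wall_lem i p ((crsXb i eA p).1 hp)
  have crsB'wall : ∀ p, CrsCN S B' p → ∃ k ∈ H j, ∃ ψ ∈ WallF j, p = b' * (k * ψ) := by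
    intro p hp
    rw [hB', crs_smul, crsXb] at hp
    obtain ⟨k, hk, ψ, hψ, he⟩ := wall_lem j _ hp
    exact ⟨k, hk, ψ, hψ, by rw [← he]; group⟩
  -- the dichotomy
  by_cases hclose : ∃ h, h ∈ H i ∧ ∃ k, k ∈ H j ∧ WdCN S ρ 1 (h⁻¹ * (b' * k))
  · -- close case
    obtain ⟨h, hh, k, hk, hu⟩ := hclose
    set u : G := h⁻¹ * (b' * k) with hudef
    have hb'eq : b' = h * u * k⁻¹ := by rw [hudef]; group
    have hB0 : B' = h • (u • XbCN X j eB) := by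
      rw [hB', hb'eq, ← smul_smul, ← smul_smul, hinvb j eB k⁻¹ (inv_mem hk)]
    have hZ : h⁻¹ • (X0 ∩ B'ᶜ) = XbCN X i eA ∩ (u • XbCN X j eB)ᶜ := by
      rw [smul_set_inter', smul_set_compl, hB0, inv_smul_smul, hinvb i eA h⁻¹ (inv_mem hh)]
    have hZfin : HFin (H i) (XbCN X i eA ∩ (u • XbCN X j eB)ᶜ) := by
      rw [← hZ]
      exact hfin_smul (inv_mem hh) hC
    have hgZ : h⁻¹ * g' ∈ XbCN X i eA ∩ (u • XbCN X j eB)ᶜ := by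
      rw [← hZ]
      exact ⟨g', ⟨hg'X0, hg'B'⟩, rfl⟩
    obtain ⟨y, hyw, hyn⟩ := hNN i eA j eB u hZfin (h⁻¹ * g') hgZ
    have hNle : NN i eA j eB u ≤ ν := hνbnd i eA j eB u (mem_PBall hu)
    have hball'' : ∀ x : G, WdCN S (ν + 1) (h⁻¹ * g') x → x ∈ X0 := by
      intro x hx
      obtain ⟨l, hl, hlen, hxe⟩ := hx
      have h2 : g' * l.prod ∈ X0 := hball' _ ⟨l, hl, hlen, rfl⟩
      have hinv : h⁻¹ • X0 = X0 := by rw [hX0]; exact hinvb i eA h⁻¹ (inv_mem hh)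
      rw [← hinv]
      refine ⟨g' * l.prod, h2, ?_⟩
      rw [hxe]
      simp [smul_eq_mul, mul_assoc]
    have hyX : y ∈ X0 := hball'' y (wd_mono (hNle.trans (Nat.le_succ _)) hyw)
    refine hyn ?_
    rwa [hX0] at hyX
  · -- far case: the walls are far apart, and one of the corners must be empty
    have F1 : ∀ p h : G, h ∈ H i → WdCN S (3*Λ+2) h p → ¬ CrsCN S B' p := by
      intro p h hh hwp hcrs
      obtain ⟨k, hk, ψ, hψ, hpe⟩ := crsB'wall p hcrs
      refine hclose ⟨h, hh, k, hk, ?_⟩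
      have hword1 : WdCN S (3*Λ+2) 1 (h⁻¹ * p) := by simpa using wd_translate h⁻¹ hwp
      have hword2 : WdCN S Λ (h⁻¹ * p) (h⁻¹ * p * ψ⁻¹) := by
        simpa using wd_translate (h⁻¹ * p) (wd_inv (bndψ j ψ hψ))
      have hcomb := wd_trans hword1 hword2
      have heq : h⁻¹ * p * ψ⁻¹ = h⁻¹ * (b' * k) := by rw [hpe]; group
      rw [heq] at hcomb
      exact wd_mono (by omega) hcomb
    have F2 : ∀ p k : G, k ∈ H j → WdCN S (3*Λ+2) (b' * k) p → ¬ CrsCN S X0 p := by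
      intro p k hk hwp hcrs
      obtain ⟨h, hh, ψ, hψ, hpe⟩ := crsX0wall p hcrs
      refine hclose ⟨h, hh, k, hk, ?_⟩
      have hword0 : WdCN S (3*Λ+2) 1 ((b' * k)⁻¹ * p) := by
        have h0 := wd_translate (b' * k)⁻¹ hwp
        have he : (b' * k)⁻¹ * (b' * k) = 1 := by group
        rw [he] at h0
        exact h0
      have hword2 : WdCN S (3*Λ+2) ψ (ψ * ((b' * k)⁻¹ * p)⁻¹) := by
        simpa using wd_translate ψ (wd_inv hword0)
      have hcomb := wd_trans (bndψ i ψ hψ) hword2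
      have heq : ψ * ((b' * k)⁻¹ * p)⁻¹ = h⁻¹ * (b' * k) := by rw [hpe]; group
      rw [heq] at hcomb
      exact wd_mono (by omega) hcomb
    -- membership in B' is constant along the wall of X0
    have stepB' : ∀ lt : List G, (∀ t ∈ lt, t ∈ Tg i ∨ t⁻¹ ∈ Tg i) → ∀ h : G, h ∈ H i →
        ((h ∈ B') ↔ (h * lt.prod ∈ B')) := by
      intro lt
      induction lt with
      | nil => intro _ h _; simp
      | cons t lt' ih =>
        intro hlt h hh
        have htH : t ∈ H i := by
          rcases hlt t (by simp) with h' | h'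
          · rw [← hTg i]; exact Subgroup.subset_closure h'
          · have h2 : t⁻¹ ∈ H i := by rw [← hTg i]; exact Subgroup.subset_closure h'
            simpa using inv_mem h2
        obtain ⟨lw, hlw1, hlw2, hlw3⟩ := bndT i t (hlt t (by simp))
        have hlwp : lw.prod = t := by rw [hlw3, one_mul]
        have hpre : ∀ k0, k0 < lw.length → ¬ CrsCN S B' (h * (lw.take k0).prod) := by
          intro k0 _
          refine F1 _ h hh ?_
          have w2 : WdCN S Λ h (h * (lw.take k0).prod) := by
            refine ⟨lw.take k0, fun s hs => hlw1 s (List.mem_of_mem_take hs), ?_, rfl⟩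
            simp only [List.length_take]
            omega
          exact wd_mono (by omega) w2
        have hstep : h ∈ B' ↔ h * t ∈ B' := by
          have hmc := memb_const (W := B') lw hlw1 h hpre
          rwa [hlwp] at hmc
        rw [List.prod_cons, ← mul_assoc]
        exact hstep.trans (ih (fun u hu => hlt u (by simp [hu])) (h * t) (mul_mem hh htH))
    -- membership in X0 is constant along the wall of B'
    have stepX0 : ∀ lt : List G, (∀ t ∈ lt, t ∈ Tg j ∨ t⁻¹ ∈ Tg j) → ∀ k : G, k ∈ H j →
        ((b' * k ∈ X0) ↔ (b' * (k * lt.prod) ∈ X0)) := by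
      intro lt
      induction lt with
      | nil => intro _ k _; simp
      | cons t lt' ih =>
        intro hlt k hk
        have htH : t ∈ H j := by
          rcases hlt t (by simp) with h' | h'
          · rw [← hTg j]; exact Subgroup.subset_closure h'
          · have h2 : t⁻¹ ∈ H j := by rw [← hTg j]; exact Subgroup.subset_closure h'
            simpa using inv_mem h2
        obtain ⟨lw, hlw1, hlw2, hlw3⟩ := bndT j t (hlt t (by simp))
        have hlwp : lw.prod = t := by rw [hlw3, one_mul]
        have hpre : ∀ k0, k0 < lw.length → ¬ CrsCN S X0 (b' * k * (lw.take k0).prod) := by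
          intro k0 _
          refine F2 _ k hk ?_
          have w2 : WdCN S Λ (b' * k) (b' * k * (lw.take k0).prod) := by
            refine ⟨lw.take k0, fun s hs => hlw1 s (List.mem_of_mem_take hs), ?_, rfl⟩
            simp only [List.length_take]
            omega
          exact wd_mono (by omega) w2
        have hstep : b' * k ∈ X0 ↔ b' * (k * t) ∈ X0 := by
          have hmc := memb_const (W := X0) lw hlw1 (b' * k) hpre
          rw [hlwp] at hmc
          rwa [← mul_assoc]
        rw [List.prod_cons]
        have hassoc : b' * (k * (t * lt'.prod)) = b' * ((k * t) * lt'.prod) := by group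
        rw [hassoc]
        exact hstep.trans (ih (fun u hu => hlt u (by simp [hu])) (k * t) (mul_mem hk htH))
    -- crossing vertices of X0 all have the same B'-membership
    have CL1 : ∀ p q : G, CrsCN S X0 p → CrsCN S X0 q → (p ∈ B' ↔ q ∈ B') := by
      have hedge : ∀ h ψ p0 : G, h ∈ H i → ψ ∈ WallF i → p0 = h * ψ →
          (p0 ∈ B' ↔ h ∈ B') := by
        intro h ψ p0 hh hψ hp0
        obtain ⟨lw, hlw1, hlw2, hlw3⟩ := wd_inv (bndψ i ψ hψ)
        have hlwp : lw.prod = ψ⁻¹ := by rw [hlw3, one_mul]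
        have hpre : ∀ k0, k0 < lw.length → ¬ CrsCN S B' (p0 * (lw.take k0).prod) := by
          intro k0 _
          refine F1 _ h hh ?_
          have w1 : WdCN S Λ h p0 := by
            rw [hp0]
            simpa using wd_translate h (bndψ i ψ hψ)
          have w2 : WdCN S Λ p0 (p0 * (lw.take k0).prod) := by
            refine ⟨lw.take k0, fun s hs => hlw1 s (List.mem_of_mem_take hs), ?_, rfl⟩
            simp only [List.length_take]
            omega
          exact wd_mono (by omega) (wd_trans w1 w2)
        have hmc := memb_const (W := B') lw hlw1 p0 hpre
        have hpr : p0 * lw.prod = h := by rw [hlwp, hp0]; group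
        rw [hpr] at hmc
        exact hmc
      intro p q hp hq
      obtain ⟨h1, hh1, ψ1, hψ1, hpe⟩ := crsX0wall p hp
      obtain ⟨h2, hh2, ψ2, hψ2, hqe⟩ := crsX0wall q hq
      have hb1 := hedge h1 ψ1 p hh1 hψ1 hpe
      have hb2 := hedge h2 ψ2 q hh2 hψ2 hqe
      obtain ⟨lt, hlt1, hlt2⟩ := exists_word (hTg i) (mul_mem (inv_mem hh1) hh2)
      have hmid := stepB' lt hlt1 h1 hh1
      rw [hlt2, show h1 * (h1⁻¹ * h2) = h2 by group] at hmid
      exact (hb1.trans hmid).trans hb2.symm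
    -- crossing vertices of B' all have the same X0-membership
    have CL2 : ∀ p q : G, CrsCN S B' p → CrsCN S B' q → (p ∈ X0 ↔ q ∈ X0) := by
      have hedge : ∀ k ψ p0 : G, k ∈ H j → ψ ∈ WallF j → p0 = b' * (k * ψ) →
          (p0 ∈ X0 ↔ b' * k ∈ X0) := by
        intro k ψ p0 hk hψ hp0
        obtain ⟨lw, hlw1, hlw2, hlw3⟩ := wd_inv (bndψ j ψ hψ)
        have hlwp : lw.prod = ψ⁻¹ := by rw [hlw3, one_mul]
        have hpre : ∀ k0, k0 < lw.length → ¬ CrsCN S X0 (p0 * (lw.take k0).prod) := by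
          intro k0 _
          refine F2 _ k hk ?_
          have w1 : WdCN S Λ (b' * k) p0 := by
            rw [hp0, show b' * (k * ψ) = b' * k * ψ by group]
            simpa using wd_translate (b' * k) (bndψ j ψ hψ)
          have w2 : WdCN S Λ p0 (p0 * (lw.take k0).prod) := by
            refine ⟨lw.take k0, fun s hs => hlw1 s (List.mem_of_mem_take hs), ?_, rfl⟩
            simp only [List.length_take]
            omega
          exact wd_mono (by omega) (wd_trans w1 w2)
        have hmc := memb_const (W := X0) lw hlw1 p0 hpre
        have hpr : p0 * lw.prod = b' * k := by rw [hlwp, hp0]; group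
        rw [hpr] at hmc
        exact hmc
      intro p q hp hq
      obtain ⟨k1, hk1, ψ1, hψ1, hpe⟩ := crsB'wall p hp
      obtain ⟨k2, hk2, ψ2, hψ2, hqe⟩ := crsB'wall q hq
      have hx1 := hedge k1 ψ1 p hk1 hψ1 hpe
      have hx2 := hedge k2 ψ2 q hk2 hψ2 hqe
      obtain ⟨lt, hlt1, hlt2⟩ := exists_word (hTg j) (mul_mem (inv_mem hk1) hk2)
      have hmid := stepX0 lt hlt1 k1 hk1
      rw [hlt2, show k1 * (k1⁻¹ * k2) = k2 by group] at hmid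
      exact (hx1.trans hmid).trans hx2.symm
    -- endgame
    by_cases hex : ∃ p0, CrsCN S B' p0 ∧ p0 ∈ X0
    · -- all crossing vertices of B' lie in X0 : then X0ᶜ lies entirely in B' or in B'ᶜ
      obtain ⟨p0, hp0c, hp0x⟩ := hex
      have hall : ∀ p, CrsCN S B' p → p ∉ X0ᶜ := by
        intro p hp hpc
        exact hpc ((CL2 p p0 hp hp0c).2 hp0x)
      obtain ⟨z2, hz2⟩ := not_hfin_nonempty hne2
      obtain ⟨z3, hz3⟩ := not_hfin_nonempty hne3
      have hw2 : z2 * (wl (z2⁻¹ * g')).prod = g' := by rw [hwl2]; group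
      obtain ⟨p2, hp2W, hp2c, hp2e⟩ := walk_bdry (W := X0ᶜ) (V := B') hall
        (wl (z2⁻¹ * g')) (hwl1 _) z2 hz2.1 (by rw [hw2]; simpa using hg'X0)
      have hw3 : z3 * (wl (z3⁻¹ * g')).prod = g' := by rw [hwl2]; group
      obtain ⟨p3, hp3W, hp3c, hp3e⟩ := walk_bdry (W := X0ᶜ) (V := B') hall
        (wl (z3⁻¹ * g')) (hwl1 _) z3 hz3.1 (by rw [hw3]; simpa using hg'X0)
      have hcl := CL1 p2 p3 (crs_compl.1 hp2c) (crs_compl.1 hp3c)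
      have hzz : z2 ∈ B' ↔ z3 ∈ B' := (hp2e.trans hcl).trans hp3e.symm
      exact hz3.2 (hzz.1 hz2.2)
    · -- all crossing vertices of B' lie in X0ᶜ : then X0 lies entirely in B' or in B'ᶜ
      have hall : ∀ p, CrsCN S B' p → p ∉ X0 := fun p hp hpx => hex ⟨p, hp, hpx⟩
      obtain ⟨z1, hz1⟩ := not_hfin_nonempty hne1
      obtain ⟨z0, hz0⟩ := not_hfin_nonempty hne2
      have hwg : g' * (wl (g'⁻¹ * z0)).prod = z0 := by rw [hwl2]; group
      obtain ⟨p1, hp1W, hp1c, hp1e⟩ := walk_bdry (W := X0) (V := B') hall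
        (wl (g'⁻¹ * z0)) (hwl1 _) g' hg'X0 (by rw [hwg]; exact hz0.1)
      have hwz : z1 * (wl (z1⁻¹ * z0)).prod = z0 := by rw [hwl2]; group
      obtain ⟨p4, hp4W, hp4c, hp4e⟩ := walk_bdry (W := X0) (V := B') hall
        (wl (z1⁻¹ * z0)) (hwl1 _) z1 hz1.1 (by rw [hwz]; exact hz0.1)
      have hcl := CL1 p1 p4 hp1c hp4c
      have hzz : g' ∈ B' ↔ z1 ∈ B' := (hp1e.trans hcl).trans hp4e.symm
      exact hg'B' (hzz.2 hz1.2)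
end

section
/- Let G be a finitely generated group with finitely generated subgroups H_1,…,H_n, for i = 1,…,n let X_i be a nontrivial H_i-almost invariant subset of G, suppose the family is in good position, and let E = E(X_1,…,X_n). Fix a finite generating set S of G with word metric d, fix g ∈ G, and suppose R > 0 satisfies: for all A, B ∈ E with A ≤ B and all g' ∈ A with N_R(g') ⊆ A, one has g' ∈ B. Let E_R = {A ∈ E : some edge of the Cayley graph of (G,S) with one endpoint in A and the other endpoint in A* has an endpoint in N_R(g)}, let E_R* = E − E_R, and let U_g = {A ∈ E_R* : g ∈ A}. Then U_g is an ultrafilter on E_R* with respect to the restriction of ≤ and the complementation involution. -/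
open Pointwise

universe u v

lemma ball_mem_aux {G : Type*} [Group G] (S : Finset G) (R : ℕ) (g : G) (A : Set G)
    (hg : g ∈ A) (hB : ¬ BNear S R g A) :
    ∀ x, InBall S R g x → x ∈ A := by
  rintro x ⟨l, hl, hlen, hx⟩
  subst hx
  induction l using List.reverseRecOn with
  | nil => simpa using hg
  | append_singleton l s ih =>
    have hlen' : l.length ≤ R := by simp at hlen; omega
    have hl' : ∀ t ∈ l, t ∈ S ∨ t⁻¹ ∈ S := fun t ht => hl t (by simp [ht])
    have hmem : g * l.prod ∈ A := ih hl' hlen'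
    rw [List.prod_append, List.prod_singleton, ← mul_assoc]
    by_contra hc
    exact hB ⟨g * l.prod, s, hl s (by simp), Or.inl ⟨hmem, hc⟩,
      Or.inl ⟨l, hl', hlen', rfl⟩⟩

lemma compl_mem_ESet {G : Type*} [Group G] {ι : Type*} {X : ι → Set G} {A : Set G}
    (hA : A ∈ ESet X) : Aᶜ ∈ ESet X := by
  obtain ⟨i, g, h | h⟩ := hA
  · exact ⟨i, g, Or.inr (by rw [h])⟩
  · exact ⟨i, g, Or.inl (by rw [h, compl_compl])⟩

lemma bnear_compl {G : Type*} [Group G] (S : Finset G) (R : ℕ) (g : G) (A : Set G) :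
    BNear S R g Aᶜ ↔ BNear S R g A := by
  constructor <;>
  · rintro ⟨x, s, hs, hcross, hball⟩
    exact ⟨x, s, hs, by simpa [or_comm] using hcross, hball⟩

/-- `U_g` is an ultrafilter on `E_R*` with respect to almost inclusion. -/
theorem Ug_is_ultrafilter
    {G : Type*} [Group G] {n : ℕ} (S : Finset G)
    (hS : Subgroup.closure (S : Set G) = ⊤)
    (H : Fin n → Subgroup G) (hfg : ∀ i, (H i).FG)
    (X : Fin n → Set G) (hnt : ∀ i, NontrivAI (H i) (X i))
    (hgp : GoodPos H X) (g : G) (R : ℕ) (hR : 0 < R)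
    (hRP : ∀ A ∈ ESet X, ∀ B ∈ ESet X, LeE H X A B →
      ∀ g' ∈ A, {x : G | InBall S R g' x} ⊆ A → g' ∈ B) :
    (∀ A ∈ ERstar S R g X, Xor' (A ∈ UgSet S R g X) (Aᶜ ∈ UgSet S R g X)) ∧
      (∀ A ∈ UgSet S R g X, ∀ B ∈ ERstar S R g X,
        LeE H X A B → B ∈ UgSet S R g X) := by
  constructor
  · rintro A ⟨hAE, hAB⟩
    have hAc : Aᶜ ∈ ERstar S R g X :=
      ⟨compl_mem_ESet hAE, fun h => hAB ((bnear_compl S R g A).mp h)⟩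
    by_cases hg : g ∈ A
    · exact Or.inl ⟨⟨⟨hAE, hAB⟩, hg⟩, fun h => h.2 hg⟩
    · exact Or.inr ⟨⟨hAc, hg⟩, fun h => hg h.2⟩
  · rintro A ⟨⟨hAE, hAB⟩, hgA⟩ B ⟨hBE, hBB⟩ hle
    exact ⟨⟨hBE, hBB⟩, hRP A hAE B hBE hle g hgA
      (fun x hx => ball_mem_aux S R g A hgA hAB x hx)⟩
end

section
/- With notation as follows: G a finitely generated group, X_1,…,X_n nontrivial H_i-almost invariant subsets (H_i finitely generated) in good position, E = E(X_1,…,X_n), a finite generating set fixed, g ∈ G, R > 0 satisfying: for all A, B ∈ E with A ≤ B and all g' ∈ A with N_R(g') ⊆ A, one has g' ∈ B; E_R = {A ∈ E : some edge of the Cayley graph with one endpoint in A and the other in A* has an endpoint in N_R(g)}, E_R* = E − E_R, U_g = {A ∈ E_R* : g ∈ A}, U_1 = U_g ∪ {B ∈ E_R : there exists A ∈ U_g with A ≤ B}, V_1 = E − (U_1 ∪ U_1*), A_1 a minimal element of V_1 with respect to ≤, and U_2 = U_1 ∪ {A_1} ∪ {B ∈ V_1 : A_1 ≤ B}. Then U_2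 is an ultrafilter on the set U_2 ∪ U_2*: no B satisfies both B ∈ U_2 and B* ∈ U_2, and whenever C ∈ U_2, D ∈ U_2 ∪ U_2* and C ≤ D, then D ∈ U_2. -/
open Pointwise

universe u v

namespace SSW
open scoped Classical

variable {G : Type*} [Group G] (S : Finset G)

/-- condition that a list is made of generators or inverses -/
def gcond (l : List G) : Prop := ∀ s ∈ l, s ∈ S ∨ s⁻¹ ∈ S

lemma inball_refl (r : ℕ) (c : G) : InBall S r c c :=
  ⟨[], by simp, by simp, by simp⟩

lemma inball_mono {r r' : ℕ} (h : r ≤ r') {c x : G} (hx : InBall S r c x) :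
    InBall S r' c x := by
  obtain ⟨l, h1, h2, h3⟩ := hx
  exact ⟨l, h1, h2.trans h, h3⟩

lemma inball_smul {r : ℕ} {c x : G} (a : G) (hx : InBall S r c x) :
    InBall S r (a * c) (a * x) := by
  obtain ⟨l, h1, h2, h3⟩ := hx
  exact ⟨l, h1, h2, by rw [h3, mul_assoc]⟩

lemma inball_of_smul {r : ℕ} {c x : G} (a : G) (hx : InBall S r (a * c) (a * x)) :
    InBall S r c x := by
  have := inball_smul S a⁻¹ hx
  simpa using this

/-- the ball of radius r about 1, as a finset -/
noncomputable def BrF (r : ℕ) : Finset G := (insert (1:G) (S ∪ S.image fun s => s⁻¹)) ^ r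

lemma prod_mem_BrF {r : ℕ} {l : List G} (hl : gcond S l) (hlen : l.length ≤ r) :
    l.prod ∈ BrF S r := by
  induction r generalizing l with
  | zero =>
    rw [Nat.le_zero, List.length_eq_zero_iff] at hlen
    subst hlen
    simp [BrF]
  | succ n ih =>
    match l with
    | [] =>
      have h1 : (1:G) ∈ BrF S n := by
        have := ih (l := []) (by intro s hs; simp at hs) (by simp)
        simpa using this
      have : BrF S (n+1) = BrF S n * insert (1:G) (S ∪ S.image fun s => s⁻¹) := by
        rw [BrF, pow_succ]; rfl
      rw [this]
      simpa using Finset.mul_mem_mul h1 (Finset.mem_insert_self _ _)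
    | s :: t =>
      have hs : s ∈ insert (1:G) (S ∪ S.image fun s => s⁻¹) := by
        rcases hl s (by simp) with h | h
        · exact Finset.mem_insert_of_mem (Finset.mem_union_left _ h)
        · refine Finset.mem_insert_of_mem (Finset.mem_union_right _ ?_)
          exact Finset.mem_image.2 ⟨s⁻¹, h, by simp⟩
      have ht : t.prod ∈ BrF S n := by
        refine ih (fun x hx => hl x (by simp [hx])) ?_
        simpa using Nat.succ_le_succ_iff.mp (by simpa using hlen)
      have : BrF S (n+1) = insert (1:G) (S ∪ S.image fun s => s⁻¹) * BrF S n := by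
        rw [BrF, pow_succ']; rfl
      rw [this, List.prod_cons]
      exact Finset.mul_mem_mul hs ht

lemma gcond_inv_reverse {l : List G} (hl : gcond S l) : gcond S (l.map (·⁻¹)).reverse := by
  intro s hs
  simp only [List.mem_reverse, List.mem_map] at hs
  obtain ⟨u, hu, rfl⟩ := hs
  rcases hl u hu with h | h
  · right; simpa using h
  · left; exact h

lemma inv_prod_mem_BrF {r : ℕ} {l : List G} (hl : gcond S l) (hlen : l.length ≤ r) :
    l.prod⁻¹ ∈ BrF S r := by
  rw [List.prod_inv_reverse]
  exact prod_mem_BrF S (gcond_inv_reverse S hl) (by simpa using hlen)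

lemma exists_word (hS : Subgroup.closure (S : Set G) = ⊤) (x : G) :
    ∃ l : List G, gcond S l ∧ l.prod = x := by
  have hx : x ∈ Subgroup.closure (S : Set G) := by rw [hS]; trivial
  induction hx using Subgroup.closure_induction with
  | mem y hy => exact ⟨[y], by intro s hs; simp at hs; subst hs; exact Or.inl hy, by simp⟩
  | one => exact ⟨[], by intro s hs; simp at hs, by simp⟩
  | mul y z _ _ hy hz =>
    obtain ⟨l1, h1, e1⟩ := hy
    obtain ⟨l2, h2, e2⟩ := hz
    refine ⟨l1 ++ l2, ?_, by rw [List.prod_append, e1, e2]⟩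
    intro s hs
    rcases List.mem_append.1 hs with h | h
    exacts [h1 s h, h2 s h]
  | inv y _ hy =>
    obtain ⟨l, h1, e1⟩ := hy
    exact ⟨(l.map (·⁻¹)).reverse, gcond_inv_reverse S h1, by rw [← List.prod_inv_reverse, e1]⟩

lemma exists_ball (hS : Subgroup.closure (S : Set G) = ⊤) (c x : G) :
    ∃ r : ℕ, InBall S r c x := by
  obtain ⟨l, h1, e1⟩ := exists_word S hS (c⁻¹ * x)
  exact ⟨l.length, l, h1, le_refl _, by rw [e1]; group⟩

lemma infinite_nat_exists_ge {s : Set ℕ} (h : s.Infinite) (n : ℕ) : ∃ m ∈ s, n ≤ m := by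
  by_contra hc
  push_neg at hc
  exact h (Set.Finite.subset (Set.finite_Iic n) (fun m hm => le_of_lt (hc m hm)))

lemma hfin_mono {K : Subgroup G} {W W' : Set G} (h : W' ⊆ W) (hf : HFin K W) : HFin K W' := by
  obtain ⟨F, hF⟩ := hf
  exact ⟨F, h.trans hF⟩

lemma hfin_empty (K : Subgroup G) : HFin K (∅ : Set G) := ⟨∅, by simp⟩

lemma hfin_union {K : Subgroup G} {W W' : Set G} (h : HFin K W) (h' : HFin K W') :
    HFin K (W ∪ W') := by
  obtain ⟨F, hF⟩ := h
  obtain ⟨F', hF'⟩ := h'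
  refine ⟨F ∪ F', ?_⟩
  rw [Finset.coe_union, Set.mul_union]
  exact Set.union_subset_union hF hF'

lemma hfin_biUnion {K : Subgroup G} (T : Finset G) (f : G → Set G)
    (h : ∀ s ∈ T, HFin K (f s)) : HFin K (⋃ s ∈ T, f s) := by
  classical
  induction T using Finset.induction with
  | empty => simpa using hfin_empty K
  | insert _ _ hnotmem ih =>
    rename_i a T'
    rw [Finset.set_biUnion_insert]
    exact hfin_union (h a (Finset.mem_insert_self a T'))
      (ih fun s hs => h s (Finset.mem_insert_of_mem hs))

lemma mem_mul_set {K : Subgroup G} {F : Set G} {x : G} :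
    x ∈ (K : Set G) * F ↔ ∃ k ∈ K, ∃ f ∈ F, x = k * f := by
  rw [Set.mem_mul]
  constructor
  · rintro ⟨k, hk, f, hf, rfl⟩; exact ⟨k, hk, f, hf, rfl⟩
  · rintro ⟨k, hk, f, hf, rfl⟩; exact ⟨k, hk, f, hf, rfl⟩

/-- smul membership as mul -/
lemma mem_smul_iff {a x : G} {W : Set G} : x ∈ a • W ↔ a⁻¹ * x ∈ W := by
  rw [Set.mem_smul_set_iff_inv_smul_mem, smul_eq_mul]

lemma smul_set_eq_iff {a : G} {W V : Set G} : W = a • V ↔ a⁻¹ • W = V := by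
  constructor
  · rintro rfl; rw [inv_smul_smul]
  · rintro rfl; rw [smul_inv_smul]

/-- HFin for a translated subgroup: W is covered by cosets of the form c k f -/
lemma hfin_smul_iff {K : Subgroup G} {c : G} {W : Set G} :
    HFin K (c⁻¹ • W) ↔ ∃ F : Finset G, W ⊆ c • ((K : Set G) * F) := by
  constructor
  · rintro ⟨F, hF⟩
    refine ⟨F, fun x hx => ?_⟩
    rw [mem_smul_iff]
    exact hF (by rw [mem_smul_iff]; simpa using hx)
  · rintro ⟨F, hF⟩
    refine ⟨F, fun x hx => ?_⟩
    rw [mem_smul_iff] at hx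
    simp only [inv_inv] at hx
    have := hF hx
    rw [mem_smul_iff] at this
    simpa using this

/-- the boundary points of A: points of A with a neighbour outside A -/
def Bdry (A : Set G) : Set G := {y | y ∈ A ∧ ∃ s, (s ∈ S ∨ s⁻¹ ∈ S) ∧ y * s ∉ A}

lemma path_lemma {A : Set G} : ∀ (l : List G) (x : G), gcond S l → x ∈ A →
    x * l.prod ∉ A → ∃ (l₁ : List G) (s : G), gcond S l₁ ∧ (s ∈ S ∨ s⁻¹ ∈ S) ∧
      l₁.length < l.length ∧ x * l₁.prod ∈ A ∧ x * l₁.prod * s ∉ A := by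
  intro l
  induction l with
  | nil => intro x _ hx hx'; simp at hx'; exact absurd hx hx'
  | cons s t ih =>
    intro x hg hx hx'
    by_cases hxs : x * s ∈ A
    · have h2 : (x * s) * t.prod ∉ A := by
        rw [List.prod_cons, ← mul_assoc] at hx'
        exact hx'
      obtain ⟨l₁, s', c1, c2, c3, c4, c5⟩ := ih (x * s) (fun u hu => hg u (by simp [hu])) hxs h2
      refine ⟨s :: l₁, s', fun u hu => ?_, c2, by simpa using Nat.succ_lt_succ c3, ?_, ?_⟩
      · rcases List.mem_cons.1 hu with h | h
        · subst h; exact hg u (by simp)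
        · exact c1 u h
      · rw [List.prod_cons, ← mul_assoc]; exact c4
      · rw [List.prod_cons, ← mul_assoc]; exact c5
    · exact ⟨[], s, fun u hu => by simp at hu, hg s (by simp), by simp, by simpa using hx,
        by simpa using hxs⟩

/-- if x is in A and its r-ball avoids a superset of the boundary, the whole ball is in A -/
lemma deep {A T : Set G} (hbd : Bdry S A ⊆ T) {w : G} (hw : w ∈ A) {r : ℕ}
    (hfar : ∀ x, InBall S r w x → x ∉ T) : ∀ x, InBall S r w x → x ∈ A := by
  intro x hx
  by_contra hxA
  obtain ⟨l, h1, h2, h3⟩ := hx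
  have hxl : w * l.prod ∉ A := by rw [← h3]; exact hxA
  obtain ⟨l₁, s, c1, c2, c3, c4, c5⟩ := path_lemma S l w h1 hw hxl
  have hball : InBall S r w (w * l₁.prod) := ⟨l₁, c1, le_of_lt (lt_of_lt_of_le c3 h2), rfl⟩
  exact hfar _ hball (hbd ⟨c4, s, c2, c5⟩)

/-- if W is not K-finite (in translated coords) then it has points whose r-ball avoids
any given coset-finite set -/
lemma far {K : Subgroup G} {c : G} {W : Set G} (h : ¬ HFin K (c⁻¹ • W)) (F : Finset G)
    (r : ℕ) : ∃ w ∈ W, ∀ x, InBall S r w x → x ∉ c • ((K : Set G) * F) := by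
  by_contra hc
  push_neg at hc
  refine h (hfin_smul_iff.2 ⟨F * BrF S r, fun w hw => ?_⟩)
  obtain ⟨x, hx, hxm⟩ := hc w hw
  obtain ⟨l, h1, h2, h3⟩ := hx
  rw [mem_smul_iff] at hxm ⊢
  obtain ⟨k, hk, f, hf, hkf⟩ := mem_mul_set.1 hxm
  have : c⁻¹ * w = k * (f * l.prod⁻¹) := by
    have : c⁻¹ * x = k * f := hkf
    rw [h3] at this
    have h4 : c⁻¹ * w = c⁻¹ * w := rfl
    calc c⁻¹ * w = (c⁻¹ * (w * l.prod)) * l.prod⁻¹ := by group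
    _ = (k * f) * l.prod⁻¹ := by rw [← mul_assoc] at this ⊢; rw [this]
    _ = k * (f * l.prod⁻¹) := by group
  refine mem_mul_set.2 ⟨k, hk, f * l.prod⁻¹, ?_, this⟩
  rw [Finset.coe_mul]
  exact Set.mul_mem_mul hf (inv_prod_mem_BrF S h1 h2)

lemma pigeonhole_fiber {F : Finset G} (f : ℕ → G) (hf : ∀ r, f r ∈ F) :
    ∃ φ ∈ F, {r : ℕ | f r = φ}.Infinite := by
  haveI : Finite ↥F := inferInstance
  obtain ⟨b, hb⟩ := Finite.exists_infinite_fiber (fun r => (⟨f r, hf r⟩ : ↥F))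
  refine ⟨(b : G), b.2, ?_⟩
  rw [← Set.infinite_coe_iff]
  have : (fun r => (⟨f r, hf r⟩ : ↥F)) ⁻¹' {b} = {r : ℕ | f r = (b : G)} := by
    ext r
    simp [Subtype.ext_iff]
  rwa [this] at hb

lemma smul_compl (a : G) (Z : Set G) : a • Zᶜ = (a • Z)ᶜ := by
  ext x
  rw [mem_smul_iff, Set.mem_compl_iff, Set.mem_compl_iff, mem_smul_iff]

lemma bdry_smul (a : G) (Z : Set G) : Bdry S (a • Z) = a • Bdry S Z := by
  ext y
  simp only [Bdry, Set.mem_setOf_eq, mem_smul_iff]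
  constructor
  · rintro ⟨h1, s, hs, h2⟩
    exact ⟨h1, s, hs, by rwa [← mul_assoc] at h2⟩
  · rintro ⟨h1, s, hs, h2⟩
    exact ⟨h1, s, hs, by rwa [← mul_assoc]⟩

lemma smul_inv_invariant {K : Subgroup G} {Z : Set G} (hinv : ∀ h ∈ K, h • Z = Z)
    {k : G} (hk : k ∈ K) : k⁻¹ • Z = Z := hinv k⁻¹ (inv_mem hk)

lemma mem_invariant {K : Subgroup G} {Z : Set G} (hinv : ∀ h ∈ K, h • Z = Z)
    {k x : G} (hk : k ∈ K) (hx : x ∈ Z) : k * x ∈ Z := by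
  rw [← hinv k hk]
  rw [mem_smul_iff]
  simpa using hx

/-- boundary of an almost invariant set is coset-finite -/
lemma bdry_fin {K : Subgroup G} {Z : Set G} (hZ : AlmostInv K Z) :
    ∃ F : Finset G, Bdry S Z ⊆ (K : Set G) * F := by
  classical
  have key : Bdry S Z ⊆ ⋃ s ∈ (S ∪ S.image fun u => u⁻¹ : Finset G),
      (Z \ (· * s⁻¹) '' Z) := by
    rintro y ⟨hy, s, hs, hys⟩
    have hsm : s ∈ (S ∪ S.image fun u => u⁻¹ : Finset G) := by
      rcases hs with h | h
      · exact Finset.mem_union_left _ h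
      · exact Finset.mem_union_right _ (Finset.mem_image.2 ⟨s⁻¹, h, by simp⟩)
    refine Set.mem_biUnion hsm ⟨hy, ?_⟩
    rintro ⟨z, hz, rfl⟩
    exact hys (by simpa using hz)
  refine (hfin_biUnion _ _ ?_).imp (fun F hF => key.trans hF)
  intro s _
  exact hfin_mono Set.subset_union_left (hZ.2 s⁻¹)

lemma almostInv_compl {K : Subgroup G} {Z : Set G} (hZ : AlmostInv K Z) :
    AlmostInv K Zᶜ := by
  constructor
  · intro h hh
    rw [smul_compl, hZ.1 h hh]
  · intro a
    have himg : (· * a) '' Zᶜ = ((· * a) '' Z)ᶜ := by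
      apply Set.image_compl_eq
      exact (Equiv.mulRight a).bijective
    rw [himg]
    have : Zᶜ \ ((· * a) '' Z)ᶜ ∪ ((· * a) '' Z)ᶜ \ Zᶜ
        = Z \ (· * a) '' Z ∪ (· * a) '' Z \ Z := by
      ext x
      simp only [Set.mem_union, Set.mem_diff, Set.mem_compl_iff, not_not]
      tauto
    rw [this]
    exact hZ.2 a


/-- Engine A: if the same set has two coset structures, one subgroup is captured by the
other's cosets. -/
lemma engine_capture (hS : Subgroup.closure (S : Set G) = ⊤)
    {K₁ K₂ : Subgroup G} {a b : G} {Z₁ Z₂ : Set G}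
    (hinv1 : ∀ h ∈ K₁, h • Z₁ = Z₁)
    (heq : a • Z₁ = b • Z₂)
    (hbd2 : ∃ F : Finset G, Bdry S Z₂ ⊆ (K₂ : Set G) * F)
    (hne : Z₁.Nonempty) (hcompl : ¬ HFin K₂ Z₂ᶜ) :
    ∃ F₀ : Finset G, ∀ h ∈ K₁, a * h ∈ b • ((K₂ : Set G) * F₀) := by
  classical
  obtain ⟨z₀, hz₀⟩ := hne
  have hu₀ : a * z₀ ∈ a • Z₁ := by rw [← smul_eq_mul]; exact Set.smul_mem_smul_set hz₀
  obtain ⟨Fb, hFb⟩ := hbd2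
  have hbdU : Bdry S (a • Z₁) ⊆ b • ((K₂ : Set G) * Fb) := by
    rw [heq, bdry_smul]
    intro x hx
    rw [mem_smul_iff] at hx ⊢
    exact hFb hx
  have hUinv : ∀ h ∈ K₁, (a * h * a⁻¹) • (a • Z₁) = a • Z₁ := by
    intro h hh
    rw [smul_smul]
    have e : a * h * a⁻¹ * a = a * h := by group
    rw [e, ← smul_smul, hinv1 h hh]
  by_cases hdeep : ∀ r : ℕ, ∃ h ∈ K₁,
      ∀ x, InBall S r (a * h * a⁻¹ * (a * z₀)) x → x ∉ b • ((K₂ : Set G) * Fb)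
  · exfalso
    have hball : ∀ r : ℕ, ∀ x, InBall S r (a * z₀) x → x ∈ a • Z₁ := by
      intro r x hx
      obtain ⟨h, hh, hfar⟩ := hdeep r
      have hcenter : a * h * a⁻¹ * (a * z₀) ∈ a • Z₁ := by
        rw [show a • Z₁ = (a * h * a⁻¹) • (a • Z₁) from (hUinv h hh).symm, mem_smul_iff]
        have e : (a * h * a⁻¹)⁻¹ * (a * h * a⁻¹ * (a * z₀)) = a * z₀ := by group
        rw [e]
        exact hu₀
      have hmem := deep S hbdU hcenter hfar ((a * h * a⁻¹) * x)
        (inball_smul S (a * h * a⁻¹) hx)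
      have : (a * h * a⁻¹) * x ∈ (a * h * a⁻¹) • (a • Z₁) := by
        rw [hUinv h hh]; exact hmem
      rw [mem_smul_iff] at this
      have e : (a * h * a⁻¹)⁻¹ * (a * h * a⁻¹ * x) = x := by group
      rwa [e] at this
    apply hcompl
    have hZ2 : Z₂ᶜ = (∅ : Set G) := by
      have hUuniv : a • Z₁ = Set.univ := by
        ext x
        simp only [Set.mem_univ, iff_true]
        obtain ⟨r, hr⟩ := exists_ball S hS (a * z₀) x
        exact hball r x hr
      have h1 : b • Z₂ᶜ = (∅ : Set G) := by
        rw [smul_compl, ← heq, hUuniv, Set.compl_univ]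
      have h2 := congrArg (fun s => b⁻¹ • s) h1
      simpa using h2
    rw [hZ2]
    exact hfin_empty K₂
  · push_neg at hdeep
    obtain ⟨r, hr⟩ := hdeep
    refine ⟨Fb * BrF S r * {z₀⁻¹}, fun h hh => ?_⟩
    obtain ⟨x, hx, hxm⟩ := hr h hh
    obtain ⟨l, hl1, hl2, hl3⟩ := hx
    rw [mem_smul_iff] at hxm
    obtain ⟨k, hk, f, hf, hkf⟩ := mem_mul_set.1 hxm
    rw [mem_smul_iff]
    refine mem_mul_set.2 ⟨k, hk, f * l.prod⁻¹ * z₀⁻¹, ?_, ?_⟩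
    · rw [Finset.coe_mul, Finset.coe_mul]
      exact Set.mul_mem_mul (Set.mul_mem_mul hf (inv_prod_mem_BrF S hl1 hl2)) (by simp)
    · rw [hl3] at hkf
      have hx' : a * h = b * (k * (f * l.prod⁻¹ * z₀⁻¹)) := by
        have e1 : a * h * a⁻¹ * (a * z₀) * l.prod = b * (k * f) := by
          calc a * h * a⁻¹ * (a * z₀) * l.prod
              = b * (b⁻¹ * (a * h * a⁻¹ * (a * z₀) * l.prod)) := by group
            _ = b * (k * f) := by rw [hkf]
        calc a * h = (a * h * a⁻¹ * (a * z₀) * l.prod) * l.prod⁻¹ * z₀⁻¹ := by group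
          _ = (b * (k * f)) * l.prod⁻¹ * z₀⁻¹ := by rw [e1]
          _ = b * (k * (f * l.prod⁻¹ * z₀⁻¹)) := by group
      rw [hx']
      group

/-- Engine A': transfer of coset-finiteness between two representations of the same set -/
lemma rep_transfer (hS : Subgroup.closure (S : Set G) = ⊤)
    {K₁ K₂ : Subgroup G} {a b : G} {Z₁ Z₂ : Set G}
    (hinv1 : ∀ h ∈ K₁, h • Z₁ = Z₁)
    (heq : a • Z₁ = b • Z₂)
    (hbd2 : ∃ F : Finset G, Bdry S Z₂ ⊆ (K₂ : Set G) * F)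
    (hne : Z₁.Nonempty) (hcompl : ¬ HFin K₂ Z₂ᶜ)
    {W : Set G} (hW : HFin K₁ (a⁻¹ • W)) : HFin K₂ (b⁻¹ • W) := by
  obtain ⟨F₀, hF₀⟩ := engine_capture S hS hinv1 heq hbd2 hne hcompl
  obtain ⟨F, hF⟩ := hfin_smul_iff.1 hW
  rw [hfin_smul_iff]
  refine ⟨F₀ * F, fun x hx => ?_⟩
  have hm := hF hx
  rw [mem_smul_iff] at hm
  obtain ⟨h, hh, f, hf, hhf⟩ := mem_mul_set.1 hm
  have hxa : x = a * h * f := by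
    calc x = a * (a⁻¹ * x) := by group
      _ = a * (h * f) := by rw [hhf]
      _ = a * h * f := by group
  have hmem := hF₀ h hh
  rw [mem_smul_iff] at hmem
  obtain ⟨k, hk, f₀, hf₀, hkf₀⟩ := mem_mul_set.1 hmem
  have hah : a * h = b * (k * f₀) := by
    calc a * h = b * (b⁻¹ * (a * h)) := by group
      _ = b * (k * f₀) := by rw [hkf₀]
  rw [mem_smul_iff]
  refine mem_mul_set.2 ⟨k, hk, f₀ * f, ?_, ?_⟩
  · rw [Finset.coe_mul]; exact Set.mul_mem_mul hf₀ hf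
  · rw [hxa, hah]; group

/-- Engine B: a corner that is coset-finite for one side is coset-finite for the other. -/
lemma engine_corner (hS : Subgroup.closure (S : Set G) = ⊤)
    {K₁ K₂ : Subgroup G} {c : G} {Z₁ Z₂ : Set G}
    (hinv1 : ∀ h ∈ K₁, h • Z₁ = Z₁)
    (hbd2 : ∃ F : Finset G, Bdry S Z₂ ⊆ (K₂ : Set G) * F)
    (hnf1 : ¬ HFin K₁ Z₁)
    (h1 : HFin K₁ (Z₁ ∩ c • Z₂)) :
    HFin K₂ (c⁻¹ • (Z₁ ∩ c • Z₂)) := by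
  classical
  by_contra hP2
  obtain ⟨F, hF⟩ := h1
  obtain ⟨Fb, hFb⟩ := hbd2
  have hbdc : Bdry S (c • Z₂) ⊆ c • ((K₂ : Set G) * Fb) := by
    rw [bdry_smul]
    intro x hx
    rw [mem_smul_iff] at hx ⊢
    exact hFb hx
  -- for every r, find a point of the corner that is r-deep in c • Z₂
  have hpick : ∀ r : ℕ, ∃ w ∈ Z₁ ∩ c • Z₂,
      ∀ x, InBall S r w x → x ∈ c • Z₂ := by
    intro r
    obtain ⟨w, hw, hfar⟩ := far S hP2 Fb r
    exact ⟨w, hw, deep S hbdc hw.2 hfar⟩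
  choose w hw hball using hpick
  -- w r = k r * f r with k r ∈ K₁
  have hwF : ∀ r, (w r) ∈ (K₁ : Set G) * F := fun r => hF (hw r)
  have hkf : ∀ r, ∃ k ∈ K₁, ∃ f ∈ F, w r = k * f := by
    intro r
    exact mem_mul_set.1 (hwF r)
  choose k hk f hf hwkf using hkf
  obtain ⟨φ, hφF, hinf⟩ := pigeonhole_fiber (F := F) f hf
  -- conclude Z₁ ⊆ K₁ * F
  apply hnf1
  refine ⟨F, fun x hx => ?_⟩
  obtain ⟨r₀, hr₀⟩ := exists_ball S hS φ x
  obtain ⟨r, hrmem, hrge⟩ := infinite_nat_exists_ge hinf r₀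
  have hfr : f r = φ := hrmem
  have hxball : InBall S r (w r) ((k r) * x) := by
    have := inball_smul S (k r) (inball_mono S hrge hr₀)
    rwa [show (k r) * φ = w r by rw [← hfr, hwkf r]] at this
  have hkx2 : (k r) * x ∈ c • Z₂ := hball r _ hxball
  have hkx1 : (k r) * x ∈ Z₁ := mem_invariant hinv1 (hk r) hx
  have := hF ⟨hkx1, hkx2⟩
  obtain ⟨k', hk', f', hf', he⟩ := mem_mul_set.1 this
  refine mem_mul_set.2 ⟨(k r)⁻¹ * k', mul_mem (inv_mem (hk r)) hk', f', hf', ?_⟩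
  calc x = (k r)⁻¹ * ((k r) * x) := by group
    _ = (k r)⁻¹ * (k' * f') := by rw [he]
    _ = (k r)⁻¹ * k' * f' := by group

/-- Engine C: the mixed smallness transfer. -/
lemma engine_mixed (hS : Subgroup.closure (S : Set G) = ⊤)
    {K₁ K₃ : Subgroup G} {a d : G} {Z₁ Z₃ : Set G} {Q : Set G}
    (hinv1 : ∀ h ∈ K₁, h • Z₁ = Z₁)
    (hinv3 : ∀ h ∈ K₃, h • Z₃ = Z₃)
    (hbd1 : ∃ F : Finset G, Bdry S Z₁ ⊆ (K₁ : Set G) * F)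
    (hncompl3 : ¬ HFin K₃ Z₃ᶜ)
    (hQsub : Q ⊆ (a • Z₁) ∩ (d • Z₃)ᶜ)
    (hQ3 : HFin K₃ (d⁻¹ • Q))
    (hPp : HFin K₁ (a⁻¹ • (((a • Z₁) ∩ (d • Z₃)ᶜ) \ Q))) :
    HFin K₁ (a⁻¹ • Q) := by
  classical
  by_contra hQ1
  obtain ⟨Fb, hFb⟩ := hbd1
  have hbdU : Bdry S (a • Z₁) ⊆ a • ((K₁ : Set G) * Fb) := by
    rw [bdry_smul]
    intro x hx
    rw [mem_smul_iff] at hx ⊢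
    exact hFb hx
  obtain ⟨Fp, hFp⟩ := hfin_smul_iff.1 hPp
  obtain ⟨Fq, hFq⟩ := hfin_smul_iff.1 hQ3
  have hpick : ∀ r : ℕ, ∃ w ∈ Q, (∀ x, InBall S r w x → x ∈ a • Z₁) ∧
      (∀ x, InBall S r w x → x ∉ a • ((K₁ : Set G) * (Fb ∪ Fp))) := by
    intro r
    obtain ⟨w, hwQ, hfar⟩ := far S hQ1 (Fb ∪ Fp) r
    refine ⟨w, hwQ, ?_, hfar⟩
    refine deep S hbdU (hQsub hwQ).1 ?_
    intro x hx hmem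
    refine hfar x hx ?_
    rw [mem_smul_iff] at hmem ⊢
    obtain ⟨kk, hkk, ff, hff, he⟩ := mem_mul_set.1 hmem
    exact mem_mul_set.2 ⟨kk, hkk, ff, by
      rw [Finset.coe_union]; exact Set.mem_union_left _ hff, he⟩
  choose w hwQ hballU hballP using hpick
  -- the ball around w r intersected with the complement of d • Z₃ lies in Q
  have hballQ : ∀ r, ∀ x, InBall S r (w r) x → x ∈ (d • Z₃)ᶜ → x ∈ Q := by
    intro r x hx hxc
    by_contra hxQ
    have hxP : x ∈ ((a • Z₁) ∩ (d • Z₃)ᶜ) \ Q := ⟨⟨hballU r x hx, hxc⟩, hxQ⟩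
    have := hFp hxP
    refine hballP r x hx ?_
    rw [mem_smul_iff] at this ⊢
    obtain ⟨kk, hkk, ff, hff, he⟩ := mem_mul_set.1 this
    exact mem_mul_set.2 ⟨kk, hkk, ff, by
      rw [Finset.coe_union]; exact Set.mem_union_right _ hff, he⟩
  -- write w r = d * k r * φ r
  have hkf : ∀ r, ∃ kk ∈ K₃, ∃ ff ∈ Fq, d⁻¹ * (w r) = kk * ff := by
    intro r
    have := hFq (hwQ r)
    rw [mem_smul_iff] at this
    exact mem_mul_set.1 this
  choose k hk φ hφ hwkf using hkf
  obtain ⟨ψ, hψF, hinf⟩ := pigeonhole_fiber (F := Fq) φ hφ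
  -- conclude (d • Z₃)ᶜ ⊆ d • (K₃ * Fq)
  apply hncompl3
  have hfin : HFin K₃ (d⁻¹ • (d • Z₃)ᶜ) := by
    rw [hfin_smul_iff]
    refine ⟨Fq, fun x hx => ?_⟩
    obtain ⟨r₀, hr₀⟩ := exists_ball S hS (d * ψ) x
    obtain ⟨r, hrmem, hrge⟩ := infinite_nat_exists_ge hinf r₀
    have hφr : φ r = ψ := hrmem
    set κ : G := d * (k r) * d⁻¹ with hκdef
    have hκw : κ * (d * ψ) = w r := by
      rw [hκdef, ← hφr]
      calc d * (k r) * d⁻¹ * (d * φ r) = d * ((k r) * (φ r)) := by group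
        _ = d * (d⁻¹ * (w r)) := by rw [← hwkf r]
        _ = w r := by group
    have hxball : InBall S r (w r) (κ * x) := by
      have := inball_smul S κ (inball_mono S hrge hr₀)
      rwa [hκw] at this
    have hκWc : κ * x ∈ (d • Z₃)ᶜ := by
      simp only [Set.mem_compl_iff] at hx ⊢
      intro hmem
      apply hx
      rw [mem_smul_iff] at hmem ⊢
      have e : d⁻¹ * (κ * x) = (k r) * (d⁻¹ * x) := by rw [hκdef]; group
      rw [e] at hmem
      have := mem_invariant hinv3 (inv_mem (hk r)) hmem
      have e2 : (k r)⁻¹ * ((k r) * (d⁻¹ * x)) = d⁻¹ * x := by group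
      rwa [e2] at this
    have hκQ : κ * x ∈ Q := hballQ r _ hxball hκWc
    have := hFq hκQ
    rw [mem_smul_iff] at this
    obtain ⟨k', hk', f', hf', he⟩ := mem_mul_set.1 this
    rw [mem_smul_iff]
    refine mem_mul_set.2 ⟨(k r)⁻¹ * k', mul_mem (inv_mem (hk r)) hk', f', hf', ?_⟩
    have e3 : d⁻¹ * (κ * x) = (k r) * (d⁻¹ * x) := by rw [hκdef]; group
    rw [e3] at he
    calc d⁻¹ * x = (k r)⁻¹ * ((k r) * (d⁻¹ * x)) := by group
      _ = (k r)⁻¹ * (k' * f') := by rw [he]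
      _ = (k r)⁻¹ * k' * f' := by group
  rwa [smul_compl, inv_smul_smul] at hfin

section ESetPart

variable {ι : Type*} {H : ι → Subgroup G} {X : ι → Set G}

lemma nonempty_of_not_hfin {K : Subgroup G} {Z : Set G} (h : ¬ HFin K Z) : Z.Nonempty := by
  rcases Set.eq_empty_or_nonempty Z with rfl | hne
  · exact absurd (hfin_empty K) h
  · exact hne

lemma eset_rep {U : Set G} (hU : U ∈ ESet X) :
    ∃ (i : ι) (a : G) (Z : Set G), (Z = X i ∨ Z = (X i)ᶜ) ∧ U = a • Z := by
  obtain ⟨i, g, h | h⟩ := hU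
  · exact ⟨i, g, X i, Or.inl rfl, h⟩
  · exact ⟨i, g, (X i)ᶜ, Or.inr rfl, by rw [h, smul_compl]⟩

lemma rep_disj {U : Set G} {i : ι} {a : G} {Z : Set G}
    (hZ : Z = X i ∨ Z = (X i)ᶜ) (hU : U = a • Z) :
    U = a • X i ∨ U = (a • X i)ᶜ := by
  rcases hZ with rfl | rfl
  · exact Or.inl hU
  · exact Or.inr (by rw [hU, smul_compl])

lemma mem_eset_of_rep {U : Set G} {i : ι} {a : G} {Z : Set G}
    (hZ : Z = X i ∨ Z = (X i)ᶜ) (hU : U = a • Z) : U ∈ ESet X :=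
  ⟨i, a, rep_disj hZ hU⟩

variable (hnt : ∀ i, NontrivAI (H i) (X i))
include hnt

lemma Z_ai {i : ι} {Z : Set G} (hZ : Z = X i ∨ Z = (X i)ᶜ) : AlmostInv (H i) Z := by
  rcases hZ with rfl | rfl
  · exact (hnt i).1
  · exact almostInv_compl (hnt i).1

lemma Z_inv {i : ι} {Z : Set G} (hZ : Z = X i ∨ Z = (X i)ᶜ) :
    ∀ h ∈ H i, h • Z = Z := (Z_ai hnt hZ).1

lemma Z_nf {i : ι} {Z : Set G} (hZ : Z = X i ∨ Z = (X i)ᶜ) : ¬ HFin (H i) Z := by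
  rcases hZ with rfl | rfl
  · exact (hnt i).2.1
  · exact (hnt i).2.2

lemma Z_nfc {i : ι} {Z : Set G} (hZ : Z = X i ∨ Z = (X i)ᶜ) : ¬ HFin (H i) Zᶜ := by
  rcases hZ with rfl | rfl
  · exact (hnt i).2.2
  · rw [compl_compl]; exact (hnt i).2.1

lemma Z_bdry {i : ι} {Z : Set G} (hZ : Z = X i ∨ Z = (X i)ᶜ) :
    ∃ F : Finset G, Bdry S Z ⊆ ((H i : Subgroup G) : Set G) * F :=
  bdry_fin S (Z_ai hnt hZ)

lemma eset_nonempty {U : Set G} (hU : U ∈ ESet X) : U.Nonempty := by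
  obtain ⟨i, a, Z, hZ, rfl⟩ := eset_rep hU
  exact (nonempty_of_not_hfin (Z_nf hnt hZ)).smul_set

variable (hS : Subgroup.closure (S : Set G) = ⊤)
include hS

/-- smallness with respect to U is independent of the representation of U -/
lemma smallFor_iff_rep {U W : Set G} {i : ι} {a : G} {Z : Set G}
    (hZ : Z = X i ∨ Z = (X i)ᶜ) (hUZ : U = a • Z) :
    SmallFor H X U W ↔ HFin (H i) (a⁻¹ • W) := by
  constructor
  · rintro ⟨j, b, hrep, hfin⟩
    obtain ⟨Z₂, hZ₂, hUZ₂⟩ : ∃ Z₂, (Z₂ = X j ∨ Z₂ = (X j)ᶜ) ∧ U = b • Z₂ := by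
      rcases hrep with h | h
      · exact ⟨X j, Or.inl rfl, h⟩
      · exact ⟨(X j)ᶜ, Or.inr rfl, by rw [h, smul_compl]⟩
    refine rep_transfer S hS (Z_inv hnt hZ₂) ?_ (Z_bdry S hnt hZ) ?_ (Z_nfc hnt hZ) hfin
    · rw [← hUZ₂, ← hUZ]
    · exact nonempty_of_not_hfin (Z_nf hnt hZ₂)
  · intro h
    exact ⟨i, a, rep_disj hZ hUZ, h⟩

lemma small_empty {U : Set G} (hU : U ∈ ESet X) : SmallFor H X U (∅ : Set G) := by
  obtain ⟨i, a, Z, hZ, rfl⟩ := eset_rep hU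
  exact ⟨i, a, rep_disj hZ rfl, by rw [Set.smul_set_empty]; exact hfin_empty _⟩

omit hnt hS in
lemma small_mono {U W W' : Set G} (h : W' ⊆ W) (hs : SmallFor H X U W) :
    SmallFor H X U W' := by
  obtain ⟨i, a, hrep, hfin⟩ := hs
  exact ⟨i, a, hrep, hfin_mono (Set.smul_set_mono h) hfin⟩

lemma small_union {U W W' : Set G} (hU : U ∈ ESet X)
    (h : SmallFor H X U W) (h' : SmallFor H X U W') : SmallFor H X U (W ∪ W') := by
  obtain ⟨i, a, Z, hZ, rfl⟩ := eset_rep hU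
  rw [smallFor_iff_rep S hnt hS hZ rfl] at h h' ⊢
  rw [Set.smul_set_union]
  exact hfin_union h h'

omit hnt hS in
lemma small_compl_iff {U W : Set G} : SmallFor H X Uᶜ W ↔ SmallFor H X U W := by
  constructor
  · rintro ⟨i, a, hrep, hfin⟩
    refine ⟨i, a, ?_, hfin⟩
    rcases hrep with h | h
    · exact Or.inr (by rw [← h, compl_compl])
    · exact Or.inl (by rw [← compl_compl U, h, compl_compl])
  · rintro ⟨i, a, hrep, hfin⟩
    refine ⟨i, a, ?_, hfin⟩
    rcases hrep with h | h
    · exact Or.inr (by rw [h])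
    · exact Or.inl (by rw [h, compl_compl])

lemma not_small_self {U : Set G} (hU : U ∈ ESet X) : ¬ SmallFor H X U U := by
  obtain ⟨i, a, Z, hZ, rfl⟩ := eset_rep hU
  rw [smallFor_iff_rep S hnt hS hZ rfl, inv_smul_smul]
  exact Z_nf hnt hZ

lemma not_small_compl {U : Set G} (hU : U ∈ ESet X) : ¬ SmallFor H X U Uᶜ := by
  obtain ⟨i, a, Z, hZ, rfl⟩ := eset_rep hU
  rw [smallFor_iff_rep S hnt hS hZ rfl, ← smul_compl, inv_smul_smul]
  exact Z_nfc hnt hZ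

omit hnt hS in
lemma eset_compl {U : Set G} (hU : U ∈ ESet X) : Uᶜ ∈ ESet X := by
  obtain ⟨i, g, h | h⟩ := hU
  · exact ⟨i, g, Or.inr (by rw [h])⟩
  · exact ⟨i, g, Or.inl (by rw [h, compl_compl])⟩

lemma eset_compl_nonempty {U : Set G} (hU : U ∈ ESet X) : Uᶜ.Nonempty :=
  eset_nonempty hnt (eset_compl hU)

/-- corner transfer: the corner U ∩ V is small for U iff small for V -/
lemma corner_transfer {U V : Set G} (hU : U ∈ ESet X) (hV : V ∈ ESet X)
    (h : SmallFor H X U (U ∩ V)) : SmallFor H X V (U ∩ V) := by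
  obtain ⟨i, a, Z₁, hZ₁, rfl⟩ := eset_rep hU
  obtain ⟨j, c', Z₂, hZ₂, rfl⟩ := eset_rep hV
  rw [smallFor_iff_rep S hnt hS hZ₁ rfl] at h
  rw [smallFor_iff_rep S hnt hS hZ₂ rfl]
  have key : a⁻¹ • ((a • Z₁) ∩ (c' • Z₂)) = Z₁ ∩ (a⁻¹ * c') • Z₂ := by
    rw [Set.smul_set_inter, inv_smul_smul, smul_smul]
  rw [key] at h
  have := engine_corner S hS (Z_inv hnt hZ₁) (Z_bdry S hnt hZ₂) (Z_nf hnt hZ₁) h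
  rw [← key] at this
  rw [smul_smul] at this
  have e : (a⁻¹ * c')⁻¹ * a⁻¹ = c'⁻¹ := by group
  rwa [e] at this

/-- mixed transfer: U ∩ Vᶜ small for U and V ∩ Wᶜ small for V imply U ∩ Wᶜ small for U -/
lemma mixed_transfer {U V W : Set G} (hU : U ∈ ESet X) (hV : V ∈ ESet X)
    (hW : W ∈ ESet X) (h1 : SmallFor H X U (U ∩ Vᶜ)) (h2 : SmallFor H X V (V ∩ Wᶜ)) :
    SmallFor H X U (U ∩ Wᶜ) := by
  -- V ∩ Wᶜ is small for W
  have h2' : SmallFor H X W (V ∩ Wᶜ) := by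
    rw [← small_compl_iff]
    exact corner_transfer S hnt hS hV (eset_compl hW) h2
  obtain ⟨i, a, Z₁, hZ₁, hUZ⟩ := eset_rep hU
  obtain ⟨k, d, Z₃, hZ₃, hWZ⟩ := eset_rep hW
  rw [smallFor_iff_rep S hnt hS hZ₁ hUZ] at h1 ⊢
  rw [smallFor_iff_rep S hnt hS hZ₃ hWZ] at h2'
  set Q : Set G := (U ∩ Wᶜ) ∩ V with hQdef
  have hQ1 : HFin (H i) (a⁻¹ • Q) := by
    refine engine_mixed S hS (a := a) (d := d) (Z_inv hnt hZ₁) (Z_inv hnt hZ₃)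
      (Z_bdry S hnt hZ₁) (Z_nfc hnt hZ₃) (Q := Q) ?_ ?_ ?_
    · rw [← hUZ, ← hWZ]
      exact fun x hx => hx.1
    · refine hfin_mono (Set.smul_set_mono ?_) h2'
      exact fun x hx => ⟨hx.2, hx.1.2⟩
    · rw [← hUZ, ← hWZ]
      refine hfin_mono (Set.smul_set_mono ?_) h1
      rintro x ⟨⟨hxU, hxW⟩, hxV⟩
      exact ⟨hxU, fun hv => hxV ⟨⟨hxU, hxW⟩, hv⟩⟩
  have hsplit : U ∩ Wᶜ = Q ∪ ((U ∩ Wᶜ) \ Q) := by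
    rw [hQdef, Set.diff_self_inter, Set.inter_union_diff]
  rw [hsplit, Set.smul_set_union]
  refine hfin_union hQ1 ?_
  refine hfin_mono (Set.smul_set_mono ?_) h1
  rintro x ⟨⟨hxU, hxW⟩, hxQ⟩
  exact ⟨hxU, fun hv => hxQ ⟨⟨hxU, hxW⟩, hv⟩⟩

end ESetPart

section OrderPart

variable {ι : Type*} {H : ι → Subgroup G} {X : ι → Set G}

lemma leE_refl (U : Set G) : LeE H X U U := Or.inl (Set.inter_compl_self U)

variable (hnt : ∀ i, NontrivAI (H i) (X i)) (hS : Subgroup.closure (S : Set G) = ⊤)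
include hnt hS

/-- smallness of any corner transfers between the two sides -/
lemma corner_transfer' {U V : Set G} (hU : U ∈ ESet X) (hV : V ∈ ESet X)
    (h : SmallFor H X U (U ∩ V)) : SmallFor H X V (U ∩ V) :=
  corner_transfer S hnt hS hU hV h

lemma corner_transfer_c {U V : Set G} (hU : U ∈ ESet X) (hV : V ∈ ESet X)
    (h : SmallFor H X U (Uᶜ ∩ V)) : SmallFor H X V (Uᶜ ∩ V) := by
  rw [← small_compl_iff] at h
  exact corner_transfer S hnt hS (eset_compl hU) hV h

lemma leE_compl {U V : Set G} (hU : U ∈ ESet X) (hV : V ∈ ESet X)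
    (h : LeE H X U V) : LeE H X Vᶜ Uᶜ := by
  rcases h with h | ⟨s1, s2, s3, s4⟩
  · left
    rw [compl_compl]
    rw [Set.inter_comm]
    exact h
  · right
    have hVc := eset_compl hV
    have hUc := eset_compl hU
    refine ⟨?_, ?_, ?_, ?_⟩
    · -- Vᶜ ∩ (Uᶜ)ᶜ = Vᶜ ∩ U small for Vᶜ
      rw [compl_compl, Set.inter_comm]
      exact corner_transfer S hnt hS hU hVc s1
    · -- ¬ small (Vᶜ ∩ Uᶜ)
      intro hsm
      apply s4
      have := corner_transfer S hnt hS hVc hUc hsm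
      rw [small_compl_iff] at this
      rwa [Set.inter_comm] at this
    · -- ¬ small (V ∩ Uᶜ)  (i.e. (Vᶜ)ᶜ ∩ Uᶜ)
      rw [compl_compl]
      intro hsm
      apply s3
      rw [small_compl_iff] at hsm
      have := corner_transfer S hnt hS hV hUc hsm
      rw [small_compl_iff] at this
      rwa [Set.inter_comm] at this
    · -- ¬ small (V ∩ U)  (i.e. (Vᶜ)ᶜ ∩ (Uᶜ)ᶜ)
      rw [compl_compl, compl_compl]
      intro hsm
      apply s2
      rw [small_compl_iff] at hsm
      have := corner_transfer S hnt hS hV hU hsm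
      rwa [Set.inter_comm] at this

variable (hgp : GoodPos H X)
include hgp

lemma leE_trans {U V W : Set G} (hU : U ∈ ESet X) (hV : V ∈ ESet X) (hW : W ∈ ESet X)
    (hUV : LeE H X U V) (hVW : LeE H X V W) : LeE H X U W := by
  by_cases hUW : U ∩ Wᶜ = ∅
  · exact Or.inl hUW
  have sUV : SmallFor H X U (U ∩ Vᶜ) := by
    rcases hUV with h | h
    · rw [h]; exact small_empty S hnt hS hU
    · exact h.1
  have sVW : SmallFor H X V (V ∩ Wᶜ) := by
    rcases hVW with h | h
    · rw [h]; exact small_empty S hnt hS hV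
    · exact h.1
  have sMain : SmallFor H X U (U ∩ Wᶜ) := mixed_transfer S hnt hS hU hV hW sUV sVW
  -- small corners force contradictions via good position
  have hn1 : ¬ SmallFor H X U (U ∩ W) := by
    intro hsm
    apply not_small_self S hnt hS hU
    have := small_union S hnt hS hU hsm sMain
    rwa [Set.inter_union_compl] at this
  have hWcU : ¬ (Uᶜ ∩ W = ∅) ∨ True := Or.inr trivial
  -- treat the two applications of good position
  have case_empty : U ∩ W = ∅ ∨ Uᶜ ∩ W = ∅ ∨ Uᶜ ∩ Wᶜ = ∅ → False := by
    rintro (h0 | h2 | h3)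
    · -- U ⊆ Wᶜ so U ∩ Wᶜ = U
      apply not_small_self S hnt hS hU
      have he : U ∩ Wᶜ = U := by
        ext x
        constructor
        · exact fun hx => hx.1
        · intro hx
          refine ⟨hx, fun hw => ?_⟩
          have : x ∈ U ∩ W := ⟨hx, hw⟩
          rw [h0] at this
          exact this
      rwa [he] at sMain
    · -- W ⊆ U : contradiction with the hypotheses as analysed
      -- W ⊆ U
      have hWU : W ⊆ U := by
        intro x hx
        by_contra hxU
        have : x ∈ Uᶜ ∩ W := ⟨hxU, hx⟩
        rw [h2] at this
        exact this
      rcases hUV with huv | huv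
      · -- U ⊆ V
        have hUV' : U ⊆ V := by
          intro x hx
          by_contra hxV
          have : x ∈ U ∩ Vᶜ := ⟨hx, hxV⟩
          rw [huv] at this
          exact this
        rcases hVW with hvw | hvw
        · -- V ⊆ W, so U ⊆ W, contradicting U ∩ Wᶜ ≠ ∅
          have hVW' : V ⊆ W := by
            intro x hx
            by_contra hxW
            have : x ∈ V ∩ Wᶜ := ⟨hx, hxW⟩
            rw [hvw] at this
            exact this
          apply hUW
          ext x
          simp only [Set.mem_inter_iff, Set.mem_compl_iff, Set.mem_empty_iff_false,
            iff_false, not_and, not_not]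
          exact fun hx => hVW' (hUV' hx)
        · -- ¬Small_V (Vᶜ ∩ W) but Vᶜ ∩ W = ∅
          apply hvw.2.2.1
          have : Vᶜ ∩ W = ∅ := by
            ext x
            simp only [Set.mem_inter_iff, Set.mem_compl_iff, Set.mem_empty_iff_false,
              iff_false, not_and]
            exact fun hxV hxW => hxV (hUV' (hWU hxW))
          rw [this]
          exact small_empty S hnt hS hV
      · rcases hVW with hvw | hvw
        · -- V ⊆ W ⊆ U so Uᶜ ∩ V = ∅, contradicting ¬Small_U (Uᶜ ∩ V)
          have hVW' : V ⊆ W := by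
            intro x hx
            by_contra hxW
            have : x ∈ V ∩ Wᶜ := ⟨hx, hxW⟩
            rw [hvw] at this
            exact this
          apply huv.2.2.1
          have : Uᶜ ∩ V = ∅ := by
            ext x
            simp only [Set.mem_inter_iff, Set.mem_compl_iff, Set.mem_empty_iff_false,
              iff_false, not_and]
            exact fun hxU hxV => hxU (hWU (hVW' hxV))
          rw [this]
          exact small_empty S hnt hS hU
        · -- Vᶜ ∩ W ⊆ U ∩ Vᶜ which is small for V: contradiction with ¬Small_V (Vᶜ ∩ W)
          apply hvw.2.2.1
          have hsm : SmallFor H X Vᶜ (U ∩ Vᶜ) := by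
            rw [show U ∩ Vᶜ = U ∩ Vᶜ from rfl] at sUV
            exact corner_transfer S hnt hS hU (eset_compl hV) sUV
          rw [small_compl_iff] at hsm
          refine small_mono ?_ hsm
          exact fun x hx => ⟨hWU hx.2, hx.1⟩
    · -- Wᶜ ⊆ U so U ∩ Wᶜ = Wᶜ : small for W, contradiction
      have he : U ∩ Wᶜ = Wᶜ := by
        ext x
        constructor
        · exact fun hx => hx.2
        · intro hx
          refine ⟨?_, hx⟩
          by_contra hxU
          have : x ∈ Uᶜ ∩ Wᶜ := ⟨hxU, hx⟩
          rw [h3] at this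
          exact this
      have := corner_transfer S hnt hS hU (eset_compl hW) sMain
      rw [he] at this
      rw [small_compl_iff] at this
      exact not_small_compl S hnt hS hW this
  have hn2 : ¬ SmallFor H X U (Uᶜ ∩ Wᶜ) := by
    intro hsm
    have := hgp U hU W hW 1 3 (by decide) (by simpa using sMain) (by simpa using hsm)
    rcases this with h | h | h | h
    · exact case_empty (Or.inl h)
    · exact hUW h
    · exact case_empty (Or.inr (Or.inl h))
    · exact case_empty (Or.inr (Or.inr h))
  have hn3 : ¬ SmallFor H X U (Uᶜ ∩ W) := by
    intro hsm
    have := hgp U hU W hW 1 2 (by decide) (by simpa using sMain) (by simpa using hsm)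
    rcases this with h | h | h | h
    · exact case_empty (Or.inl h)
    · exact hUW h
    · exact case_empty (Or.inr (Or.inl h))
    · exact case_empty (Or.inr (Or.inr h))
  exact Or.inr ⟨sMain, hn1, hn3, hn2⟩

end OrderPart

section Ultra

variable {n : ℕ} {H : Fin n → Subgroup G} {X : Fin n → Set G}
variable {R : ℕ} {g : G}

lemma bnear_compl {A : Set G} (h : BNear S R g Aᶜ) : BNear S R g A := by
  obtain ⟨x, s, hs, hcross, hball⟩ := h
  refine ⟨x, s, hs, ?_, hball⟩
  simp only [Set.mem_compl_iff, not_not] at hcross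
  tauto

/-- if no boundary edge of A meets the R-ball around g and g ∈ A, the ball lies in A -/
lemma ball_subset_of_not_bnear {A : Set G} (hnb : ¬ BNear S R g A) (hg : g ∈ A) :
    {x : G | InBall S R g x} ⊆ A := by
  intro x hx
  by_contra hxA
  obtain ⟨l, h1, h2, h3⟩ := hx
  have hxl : g * l.prod ∉ A := by rw [← h3]; exact hxA
  obtain ⟨l₁, s, c1, c2, c3, c4, c5⟩ := path_lemma S l g h1 hg hxl
  exact hnb ⟨g * l₁.prod, s, c2, Or.inl ⟨c4, c5⟩,
    Or.inl ⟨l₁, c1, le_of_lt (lt_of_lt_of_le c3 h2), rfl⟩⟩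

variable (hnt : ∀ i, NontrivAI (H i) (X i)) (hS : Subgroup.closure (S : Set G) = ⊤)
  (hgp : GoodPos H X)
  (hRP : ∀ A ∈ ESet X, ∀ B ∈ ESet X, LeE H X A B →
      ∀ g' ∈ A, {x : G | InBall S R g' x} ⊆ A → g' ∈ B)

include hRP in
/-- F2 : an element of U_g almost included in B forces g ∈ B -/
lemma mem_of_ug_le {A B : Set G} (hA : A ∈ UgSet S R g X) (hB : B ∈ ESet X)
    (hLe : LeE H X A B) : g ∈ B :=
  hRP A hA.1.1 B hB hLe g hA.2 (ball_subset_of_not_bnear S hA.1.2 hA.2)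

include hRP in
lemma g_mem_of_u1 {B : Set G} (hB : B ∈ U1Set H S R g X) : g ∈ B := by
  rcases hB with hB | hB
  · exact hB.2
  · obtain ⟨A, hA, hLe⟩ := hB.2
    exact mem_of_ug_le S hRP hA hB.1.1 hLe

omit hRP in
lemma u1_subset_eset {B : Set G} (hB : B ∈ U1Set H S R g X) : B ∈ ESet X := by
  rcases hB with hB | hB
  · exact hB.1.1
  · exact hB.1.1

include hRP in
/-- L4 : anything above an element of U_g is in U₁ -/
lemma mem_u1_of_ug_le {A D : Set G} (hA : A ∈ UgSet S R g X) (hD : D ∈ ESet X)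
    (hLe : LeE H X A D) : D ∈ U1Set H S R g X := by
  by_cases hb : BNear S R g D
  · exact Or.inr ⟨⟨hD, hb⟩, A, hA, hLe⟩
  · exact Or.inl ⟨⟨hD, hb⟩, mem_of_ug_le S hRP hA hD hLe⟩

variable {A₁ : Set G} (hA1 : A₁ ∈ V1Set H S R g X)

include hA1 in
lemma u2_subset_eset {B : Set G} (hB : B ∈ U2Set H S R g X A₁) : B ∈ ESet X := by
  rcases hB with (hB | hB) | hB
  · exact u1_subset_eset S hB
  · rw [Set.mem_singleton_iff] at hB
    rw [hB]
    exact hA1.1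
  · exact hB.1.1

include hnt hS hA1 in
/-- the juggling lemma : A₁ ≤ B and A₁ ≤ Bᶜ are contradictory -/
lemma juggle {B : Set G} (hB : B ∈ ESet X) (h1 : LeE H X A₁ B) (h2 : LeE H X A₁ Bᶜ) :
    False := by
  have hA1E : A₁ ∈ ESet X := hA1.1
  rcases h1 with h1 | ⟨t1, t2, t3, t4⟩
  · rcases h2 with h2 | ⟨u1, u2, u3, u4⟩
    · rw [compl_compl] at h2
      have : A₁ = ∅ := by
        rw [← Set.inter_union_compl A₁ B, h2, h1, Set.union_empty]
      obtain ⟨x, hx⟩ := eset_nonempty hnt hA1E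
      rw [this] at hx
      exact hx
    · apply u2
      rw [h1]
      exact small_empty S hnt hS hA1E
  · rcases h2 with h2 | ⟨u1, u2, u3, u4⟩
    · rw [compl_compl] at h2
      apply t2
      rw [h2]
      exact small_empty S hnt hS hA1E
    · apply t2
      rw [compl_compl] at u1
      exact u1

include hnt hS hgp hRP hA1 in
/-- the main incompatibility : C, B ∈ U₂ with C ≤ Bᶜ is impossible -/
lemma main_incompat {C B : Set G} (hC : C ∈ U2Set H S R g X A₁)
    (hB : B ∈ U2Set H S R g X A₁) (hLe : LeE H X C Bᶜ) : False := by
  have hBE : B ∈ ESet X := u2_subset_eset S hA1 hB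
  have hCE : C ∈ ESet X := u2_subset_eset S hA1 hC
  have hBcE : Bᶜ ∈ ESet X := eset_compl hBE
  -- first, the case C ∈ U₁
  have hM1 : ∀ C' B' : Set G, C' ∈ U1Set H S R g X → B' ∈ U2Set H S R g X A₁ →
      LeE H X C' B'ᶜ → False := by
    intro C' B' hC' hB' hLe'
    have hC'E : C' ∈ ESet X := u1_subset_eset S hC'
    have hB'E : B' ∈ ESet X := u2_subset_eset S hA1 hB'
    obtain ⟨A, hA, hALe⟩ : ∃ A, A ∈ UgSet S R g X ∧ LeE H X A C' := by
      rcases hC' with h | h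
      · exact ⟨C', h, leE_refl C'⟩
      · obtain ⟨A, hA, hALe⟩ := h.2
        exact ⟨A, hA, hALe⟩
    have hABc : LeE H X A B'ᶜ :=
      leE_trans S hnt hS hgp hA.1.1 hC'E (eset_compl hB'E) hALe hLe'
    have hBc1 : B'ᶜ ∈ U1Set H S R g X :=
      mem_u1_of_ug_le S hRP hA (eset_compl hB'E) hABc
    rcases hB' with (hB' | hB') | hB'
    · exact (g_mem_of_u1 S hRP hBc1) (g_mem_of_u1 S hRP hB')
    · rw [Set.mem_singleton_iff] at hB'
      refine hA1.2 (Or.inr ?_)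
      exact ⟨B'ᶜ, hBc1, by simp [hB']⟩
    · refine hB'.1.2 (Or.inr ?_)
      exact ⟨B'ᶜ, hBc1, by simp⟩
  rcases hC with (hC | hC) | hC
  · exact hM1 C B hC hB hLe
  · -- C = A₁
    rw [Set.mem_singleton_iff] at hC
    subst hC
    rcases hB with (hB | hB) | hB
    · -- B ∈ U₁ : use symmetry
      have hsymm : LeE H X B Cᶜ := by
        have := leE_compl S hnt hS hCE hBcE hLe
        rwa [compl_compl] at this
      exact hM1 B C hB (Or.inl (Or.inr rfl)) hsymm
    · rw [Set.mem_singleton_iff] at hB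
      subst hB
      exact juggle S hnt hS hA1 hBE (leE_refl B) hLe
    · exact juggle S hnt hS hA1 hBE hB.2 hLe
  · -- C ∈ V₁ with A₁ ≤ C
    have hA1C : LeE H X A₁ C := hC.2
    have hA1Bc : LeE H X A₁ Bᶜ :=
      leE_trans S hnt hS hgp hA1.1 hCE hBcE hA1C hLe
    rcases hB with (hB | hB) | hB
    · have hsymm : LeE H X B Cᶜ := by
        have := leE_compl S hnt hS hCE hBcE hLe
        rwa [compl_compl] at this
      exact hM1 B C hB (Or.inr hC) hsymm
    · rw [Set.mem_singleton_iff] at hB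
      subst hB
      exact juggle S hnt hS hA1 hBE (leE_refl B) hA1Bc
    · exact juggle S hnt hS hA1 hBE hB.2 hA1Bc

end Ultra

end SSW

/-- `U₂` is an ultrafilter on `U₂ ∪ U₂*`. -/
theorem U2_is_ultrafilter
    {G : Type*} [Group G] {n : ℕ} (S : Finset G)
    (hS : Subgroup.closure (S : Set G) = ⊤)
    (H : Fin n → Subgroup G) (hfg : ∀ i, (H i).FG)
    (X : Fin n → Set G) (hnt : ∀ i, NontrivAI (H i) (X i))
    (hgp : GoodPos H X) (g : G) (R : ℕ) (hR : 0 < R)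
    (hRP : ∀ A ∈ ESet X, ∀ B ∈ ESet X, LeE H X A B →
      ∀ g' ∈ A, {x : G | InBall S R g' x} ⊆ A → g' ∈ B)
    (A₁ : Set G) (hA1 : A₁ ∈ V1Set H S R g X)
    (hmin : ∀ B ∈ V1Set H S R g X, LeE H X B A₁ → B = A₁) :
    (∀ B : Set G, ¬ (B ∈ U2Set H S R g X A₁ ∧ Bᶜ ∈ U2Set H S R g X A₁)) ∧
      (∀ C ∈ U2Set H S R g X A₁,
        ∀ D ∈ U2Set H S R g X A₁ ∪ (fun B : Set G => Bᶜ) '' U2Set H S R g X A₁,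
          LeE H X C D → D ∈ U2Set H S R g X A₁) := by
  constructor
  · rintro B ⟨h1, h2⟩
    refine SSW.main_incompat S hnt hS hgp hRP hA1 h1 h2 ?_
    left
    rw [compl_compl, Set.inter_compl_self]
  · rintro C hC D (hD | ⟨B, hB, rfl⟩) hLe
    · exact hD
    · exact (SSW.main_incompat S hnt hS hgp hRP hA1 hC hB hLe).elim
end

section
/- Let G be a finitely generated group with a finitely generated subgroup H, let X be a nontrivial H-almost invariant subset of G, and let 𝒦 = 𝒦(X) = {g ∈ G : gX ~ X or gX ~ X*} and 𝒦₀ = 𝒦₀(X) = {g ∈ G : gX ~ X}. If H has finite index in 𝒦, then there is a 𝒦₀-almost invariant subset W of G whose stabiliser {g ∈ G : gW = W} equals 𝒦₀, such that W is equivalent to X and E(W) is nested with respect to 𝒦, i.e. for every k ∈ 𝒦 one of the four corners of (W, kW) is empty. -/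
open Pointwise

universe u v

section Aux

variable {G : Type*} [Group G]

lemma hfin_mono {H : Subgroup G} {A B : Set G} (hB : HFin H B) (hAB : A ⊆ B) : HFin H A :=
  ⟨hB.choose, hAB.trans hB.choose_spec⟩

lemma hfin_union {H : Subgroup G} {A B : Set G} (hA : HFin H A) (hB : HFin H B) :
    HFin H (A ∪ B) := by
  classical
  obtain ⟨F1, h1⟩ := hA; obtain ⟨F2, h2⟩ := hB
  refine ⟨F1 ∪ F2, ?_⟩
  rintro x (hx | hx)
  · exact Set.mul_subset_mul_left (by simp [Finset.coe_union]) (h1 hx)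
  · exact Set.mul_subset_mul_left (by simp [Finset.coe_union]) (h2 hx)

lemma hfin_of_le {H K : Subgroup G} (hHK : H ≤ K) {A : Set G} (hA : HFin H A) : HFin K A := by
  obtain ⟨F, hF⟩ := hA
  exact ⟨F, hF.trans (Set.mul_subset_mul_right (fun x hx => hHK hx))⟩

lemma smul_subset_of_subset {H : Subgroup G} {h : G} (hh : h ∈ H) {A : Set G} {F : Finset G}
    (hA : A ⊆ (H : Set G) * (F : Set G)) : h • A ⊆ (H : Set G) * (F : Set G) := by
  rintro x hx
  obtain ⟨a, ha, rfl⟩ := Set.mem_smul_set.1 hx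
  obtain ⟨y, hy, f, hf, rfl⟩ := Set.mem_mul.1 (hA ha)
  have : h • (y * f) = (h * y) * f := by simp [smul_eq_mul, mul_assoc]
  rw [this]
  exact Set.mul_mem_mul (mul_mem hh hy) hf

lemma hfin_smul_mem {H : Subgroup G} {h : G} (hh : h ∈ H) {A : Set G} (hA : HFin H A) :
    HFin H (h • A) := by
  obtain ⟨F, hF⟩ := hA
  exact ⟨F, smul_subset_of_subset hh hF⟩

lemma hfin_image_mul_right {H : Subgroup G} {A : Set G} (a : G) (hA : HFin H A) :
    HFin H ((· * a) '' A) := by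
  classical
  obtain ⟨F, hF⟩ := hA
  refine ⟨F.image (· * a), ?_⟩
  rintro x ⟨y, hy, rfl⟩
  obtain ⟨z, hz, f, hf, rfl⟩ := Set.mem_mul.1 (hF hy)
  show z * f * a ∈ _
  rw [mul_assoc]
  exact Set.mul_mem_mul hz (by simpa using Finset.mem_image_of_mem (· * a) hf)

lemma mem_image_mul_right_iff {A : Set G} {a x : G} : x ∈ (· * a) '' A ↔ x * a⁻¹ ∈ A := by
  constructor
  · rintro ⟨w, hw, rfl⟩; simpa
  · intro h; exact ⟨x * a⁻¹, h, by simp⟩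

omit [Group G] in
lemma sd_sub_trans {A B C : Set G} :
    (A \ C ∪ C \ A) ⊆ (A \ B ∪ B \ A) ∪ (B \ C ∪ C \ B) := by
  intro x
  simp only [Set.mem_union, Set.mem_diff]
  tauto

omit [Group G] in
lemma sd_compl_eq {A B : Set G} : (Aᶜ \ Bᶜ ∪ Bᶜ \ Aᶜ) = (A \ B ∪ B \ A) := by
  ext x
  simp only [Set.mem_union, Set.mem_diff, Set.mem_compl_iff]
  tauto

lemma sd_smul_eq (g : G) (A B : Set G) :
    (g • A \ g • B ∪ g • B \ g • A) = g • (A \ B ∪ B \ A) := by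
  rw [Set.smul_set_union, Set.smul_set_sdiff, Set.smul_set_sdiff]

lemma hfin_biUnion {H : Subgroup G} (F : Finset G) (f : G → Set G)
    (hf : ∀ s ∈ F, HFin H (f s)) : HFin H (⋃ s ∈ F, f s) := by
  classical
  induction F using Finset.induction_on with
  | empty => simpa using hfin_empty H
  | insert _ _ hx ih =>
    rw [Finset.set_biUnion_insert]
    exact hfin_union (hf _ (Finset.mem_insert_self _ _))
      (ih fun s hs => hf s (Finset.mem_insert_of_mem hs))

/-- Cover a subgroup of finite index over `H` by finitely many right cosets `Ht`. -/
lemma cover_of_index {H K : Subgroup G} (h : (H.subgroupOf K).index ≠ 0) :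
    ∃ T : Finset G, (∀ t ∈ T, t ∈ K) ∧ ∀ k ∈ K, ∃ h ∈ H, ∃ t ∈ T, k = h * t := by
  classical
  have hfin : Finite (K ⧸ H.subgroupOf K) := by
    rcases Nat.card_ne_zero.1 h with ⟨_, h2⟩
    exact h2
  haveI := Fintype.ofFinite (K ⧸ H.subgroupOf K)
  refine ⟨Finset.image (fun q : K ⧸ H.subgroupOf K => ((Quotient.out q : K) : G)⁻¹)
      Finset.univ, ?_, ?_⟩
  · intro t ht
    simp only [Finset.mem_image] at ht
    obtain ⟨q, _, rfl⟩ := ht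
    exact inv_mem (Quotient.out q).2
  · intro k hk
    set kk : K := ⟨k⁻¹, inv_mem hk⟩
    set q : K ⧸ H.subgroupOf K := QuotientGroup.mk kk
    have hout : QuotientGroup.mk (s := H.subgroupOf K) (Quotient.out q) = QuotientGroup.mk kk := by
      simpa [q] using Quotient.out_eq q
    have hrel : ((Quotient.out q)⁻¹ * kk : K) ∈ H.subgroupOf K := QuotientGroup.eq.1 hout
    have hrelG : ((Quotient.out q : K) : G)⁻¹ * k⁻¹ ∈ H := hrel
    refine ⟨(((Quotient.out q : K) : G)⁻¹ * k⁻¹)⁻¹, inv_mem hrelG,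
      ((Quotient.out q : K) : G)⁻¹, Finset.mem_image_of_mem _ (Finset.mem_univ q), ?_⟩
    group

/-- Words in generators. -/
lemma exists_word_s18 {S : Finset G} (hS : Subgroup.closure (S : Set G) = ⊤) (g : G) :
    ∃ l : List G, (∀ x ∈ l, x ∈ S ∨ x⁻¹ ∈ S) ∧ l.prod = g := by
  have hg : g ∈ Submonoid.closure ((S : Set G) ∪ (S : Set G)⁻¹) := by
    rw [← Subgroup.closure_toSubmonoid, hS]
    trivial
  obtain ⟨l, hl, rfl⟩ := Submonoid.exists_list_of_mem_closure hg
  exact ⟨l, fun x hx => by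
    rcases hl x hx with h | h
    · exact Or.inl h
    · exact Or.inr (by simpa [Set.mem_inv] using h), rfl⟩

/-- The setoid whose classes are the orbits `Kx` of the left multiplication action of `K`. -/
def orbSetoid (K : Subgroup G) : Setoid G where
  r x y := y * x⁻¹ ∈ K
  iseqv := by
    refine ⟨fun x => by simpa using one_mem K, fun {x y} h => by simpa using inv_mem h,
      fun {x y z} h1 h2 => ?_⟩
    have := mul_mem h2 h1
    simpa [mul_assoc] using this

/-- A choice of representative for the `K`-orbit of `x`. -/
noncomputable def orbRep (K : Subgroup G) (x : G) : G :=
  Quotient.out (Quotient.mk (orbSetoid K) x)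

lemma orbRep_rel (K : Subgroup G) (x : G) : x * (orbRep K x)⁻¹ ∈ K := by
  have h : Quotient.mk (orbSetoid K) (orbRep K x) = Quotient.mk (orbSetoid K) x :=
    Quotient.out_eq _
  exact Quotient.exact h

lemma orbRep_smul (K : Subgroup G) {k : G} (hk : k ∈ K) (x : G) :
    orbRep K (k * x) = orbRep K x := by
  unfold orbRep
  congr 1
  refine Quotient.sound (?_ : x * (k * x)⁻¹ ∈ K)
  simpa [mul_inv_rev, ← mul_assoc] using inv_mem hk

omit [Group G] in
lemma prop_aux1 {P P' Q Q' R R' : Prop} (h1 : P ↔ P') (h2 : R ↔ R') (h3 : P' → (Q ↔ Q')) :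
    ((P ∧ Q) ∨ (¬ P ∧ R)) ↔ ((P' ∧ Q') ∨ (¬ P' ∧ R')) := by tauto

omit [Group G] in
lemma prop_aux2 {P P' Q Q' R R' : Prop} (h1 : P ↔ P') (h2 : R ↔ ¬ R') (h3 : P' → (Q ↔ ¬ Q')) :
    ((P ∧ Q) ∨ (¬ P ∧ R)) ↔ ¬ ((P' ∧ Q') ∨ (¬ P' ∧ R')) := by tauto

/-- `x` is a good point: every element of `𝒦₀` moves `X` compatibly with `X` at `x`, and
every element of `𝒦 − 𝒦₀` moves `X` compatibly with `Xᶜ` at `x`. -/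
def GoodPt (𝒦 𝒦₀ : Subgroup G) (X : Set G) (x : G) : Prop :=
  (∀ k ∈ 𝒦₀, (x ∈ k • X ↔ x ∈ X)) ∧ (∀ k ∈ 𝒦, k ∉ 𝒦₀ → (x ∈ k • X ↔ x ∉ X))

/-- The reference pattern on an orbit: the `𝒦₀`-part of the orbit of the representative. -/
def patPt (𝒦 𝒦₀ : Subgroup G) (x : G) : Prop := x * (orbRep 𝒦 x)⁻¹ ∈ 𝒦₀

/-- The nested almost invariant set: agree with `X` at good points, use the reference
pattern at bad points. -/
def Wset (𝒦 𝒦₀ : Subgroup G) (X : Set G) : Set G :=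
  {x | (GoodPt 𝒦 𝒦₀ X x ∧ x ∈ X) ∨ (¬ GoodPt 𝒦 𝒦₀ X x ∧ patPt 𝒦 𝒦₀ x)}

end Aux

set_option maxHeartbeats 1000000 in
/-- Scott–Swarup, Proposition 2.14, part 1: if `H` has finite index in `𝒦(X)`, there is
an almost invariant set `W` equivalent to `X`, with stabiliser `𝒦₀`, such that `E(W)`
is nested with respect to `𝒦`. -/
theorem finite_index_case_nested
    {G : Type*} [Group G] (hG : Group.FG G) (H : Subgroup G) (hH : H.FG)
    (X : Set G) (hX : NontrivAI H X)
    (𝒦 𝒦₀ : Subgroup G)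
    (h𝒦 : (𝒦 : Set G) = {g : G | AIEquiv H (g • X) X ∨ AIEquiv H (g • X) Xᶜ})
    (h𝒦₀ : (𝒦₀ : Set G) = {g : G | AIEquiv H (g • X) X})
    (hfin : (H.subgroupOf 𝒦).index ≠ 0) :
    ∃ W : Set G, AlmostInv 𝒦₀ W ∧ {g : G | g • W = W} = (𝒦₀ : Set G) ∧
      AIEquiv H X W ∧
      ∀ k ∈ 𝒦, (W ∩ k • W = ∅ ∨ W ∩ (k • W)ᶜ = ∅ ∨
        Wᶜ ∩ k • W = ∅ ∨ Wᶜ ∩ (k • W)ᶜ = ∅) := by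
  classical
  obtain ⟨⟨hXinv, hXbd⟩, hXnf, hXcnf⟩ := hX
  have hms : ∀ (g : G) (A : Set G) (x : G), x ∈ g • A ↔ g⁻¹ * x ∈ A := fun g A x => by
    rw [Set.mem_smul_set_iff_inv_smul_mem, smul_eq_mul]
  have hmem𝒦₀ : ∀ g : G, g ∈ 𝒦₀ ↔ AIEquiv H (g • X) X := fun g => by
    rw [← SetLike.mem_coe, h𝒦₀]; rfl
  have hmem𝒦 : ∀ g : G, g ∈ 𝒦 ↔ (AIEquiv H (g • X) X ∨ AIEquiv H (g • X) Xᶜ) := fun g => by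
    rw [← SetLike.mem_coe, h𝒦]; rfl
  have hH𝒦₀ : ∀ h ∈ H, h ∈ 𝒦₀ := by
    intro h hh
    rw [hmem𝒦₀, hXinv h hh]
    exact hfin_mono (hfin_empty H) (by simp)
  have hHle : H ≤ 𝒦₀ := hH𝒦₀
  have h𝒦₀𝒦 : 𝒦₀ ≤ 𝒦 := fun g hg => (hmem𝒦 g).2 (Or.inl ((hmem𝒦₀ g).1 hg))
  obtain ⟨T, hT𝒦, hTcov⟩ := cover_of_index hfin
  -- translation of H-finite sets by elements of 𝒦
  have hKfin : ∀ k ∈ 𝒦, ∀ A : Set G, HFin H A → HFin H (k • A) := by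
    rintro k hk A ⟨F, hF⟩
    refine ⟨T * F, ?_⟩
    rintro x hx
    obtain ⟨a, ha, rfl⟩ := Set.mem_smul_set.1 hx
    obtain ⟨y, hy, f, hf, rfl⟩ := Set.mem_mul.1 (hF ha)
    have hky : k * y ∈ 𝒦 := mul_mem hk (h𝒦₀𝒦 (hH𝒦₀ y hy))
    obtain ⟨h2, hh2, t, ht, hkye⟩ := hTcov _ hky
    have heq : k • (y * f) = h2 * (t * f) := by
      rw [smul_eq_mul, ← mul_assoc, hkye, mul_assoc]
    rw [heq]
    exact Set.mul_mem_mul (SetLike.mem_coe.2 hh2)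
      (by rw [Finset.coe_mul]; exact Set.mul_mem_mul (Finset.mem_coe.2 ht) hf)
  -- basic moves on the equivalence relation
  have equiv_trans : ∀ A B C : Set G, AIEquiv H A B → AIEquiv H B C → AIEquiv H A C :=
    fun A B C h1 h2 => hfin_mono (hfin_union h1 h2) sd_sub_trans
  have equiv_compl : ∀ A B : Set G, AIEquiv H A B → AIEquiv H Aᶜ Bᶜ := fun A B h => by
    unfold AIEquiv at *
    rwa [sd_compl_eq]
  have equiv_smul : ∀ k ∈ 𝒦, ∀ A B : Set G, AIEquiv H A B → AIEquiv H (k • A) (k • B) :=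
    fun k hk A B h => by
      unfold AIEquiv at *
      rw [sd_smul_eq]
      exact hKfin k hk _ h
  -- the index two lemma
  have hI2 : ∀ a ∈ 𝒦, ∀ b ∈ 𝒦, a ∉ 𝒦₀ → b ∉ 𝒦₀ → a * b ∈ 𝒦₀ := by
    intro a ha b hb ha0 hb0
    have haX : AIEquiv H (a • X) Xᶜ :=
      ((hmem𝒦 a).1 ha).resolve_left (fun h => ha0 ((hmem𝒦₀ a).2 h))
    have hbX : AIEquiv H (b • X) Xᶜ :=
      ((hmem𝒦 b).1 hb).resolve_left (fun h => hb0 ((hmem𝒦₀ b).2 h))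
    rw [hmem𝒦₀]
    have h1 : AIEquiv H ((a * b) • X) (a • Xᶜ) := by
      rw [mul_smul]
      exact equiv_smul a ha _ _ hbX
    have h2 : AIEquiv H (a • Xᶜ) X := by
      rw [Set.smul_set_compl]
      have := equiv_compl _ _ haX
      rwa [compl_compl] at this
    exact equiv_trans _ _ _ h1 h2
  have hpar0 : ∀ k ∈ 𝒦₀, ∀ m : G, (k * m ∈ 𝒦₀ ↔ m ∈ 𝒦₀) := fun k hk m =>
    ⟨fun h => by simpa using mul_mem (inv_mem hk) h, fun h => mul_mem hk h⟩
  have hpar : ∀ k ∈ 𝒦, ∀ m ∈ 𝒦, k ∉ 𝒦₀ → (k * m ∈ 𝒦₀ ↔ m ∉ 𝒦₀) := by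
    intro k hk m hm hk0
    constructor
    · intro hkm hm0
      exact hk0 (by simpa using mul_mem hkm (inv_mem hm0))
    · intro hm0
      exact hI2 k hk m hm hk0 hm0
  -- the uniform H-finite bound
  obtain ⟨FA, hFA1, hFA2⟩ : ∃ FA : Finset G,
      (∀ k ∈ 𝒦₀, ((k • X \ X) ∪ (X \ k • X)) ⊆ (H : Set G) * (FA : Set G)) ∧
      (∀ k ∈ 𝒦, k ∉ 𝒦₀ → ((k • X \ Xᶜ) ∪ (Xᶜ \ k • X)) ⊆ (H : Set G) * (FA : Set G)) := by
    set FF : G → Finset G := fun t =>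
      if h1 : HFin H ((t • X \ X) ∪ (X \ t • X)) then h1.choose
      else if h2 : HFin H ((t • X \ Xᶜ) ∪ (Xᶜ \ t • X)) then h2.choose else ∅ with hFFdef
    refine ⟨T.biUnion FF, ?_, ?_⟩
    · intro k hk
      obtain ⟨h, hh, t, ht, rfl⟩ := hTcov k (h𝒦₀𝒦 hk)
      have ht0 : t ∈ 𝒦₀ := (hpar0 h (hH𝒦₀ h hh) t).1 hk
      have htfin : HFin H ((t • X \ X) ∪ (X \ t • X)) := (hmem𝒦₀ t).1 ht0
      have hFFt : ((t • X \ X) ∪ (X \ t • X)) ⊆ (H : Set G) * ((FF t : Finset G) : Set G) := by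
        simp only [hFFdef, dif_pos htfin]
        exact htfin.choose_spec
      have heq : (((h * t) • X \ X) ∪ (X \ (h * t) • X)) = h • ((t • X \ X) ∪ (X \ t • X)) := by
        rw [mul_smul, ← sd_smul_eq h (t • X) X, hXinv h hh]
      rw [heq]
      exact (smul_subset_of_subset hh hFFt).trans
        (Set.mul_subset_mul_left (Finset.coe_subset.2 (Finset.subset_biUnion_of_mem FF ht)))
    · intro k hk hk0
      obtain ⟨h, hh, t, ht, rfl⟩ := hTcov k hk
      have ht0 : t ∉ 𝒦₀ := fun hc => hk0 (mul_mem (hH𝒦₀ h hh) hc)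
      have htK : t ∈ 𝒦 := hT𝒦 t ht
      have hnot : ¬ HFin H ((t • X \ X) ∪ (X \ t • X)) := fun hc => ht0 ((hmem𝒦₀ t).2 hc)
      have htfin : HFin H ((t • X \ Xᶜ) ∪ (Xᶜ \ t • X)) :=
        ((hmem𝒦 t).1 htK).resolve_left hnot
      have hFFt : ((t • X \ Xᶜ) ∪ (Xᶜ \ t • X)) ⊆ (H : Set G) * ((FF t : Finset G) : Set G) := by
        simp only [hFFdef, dif_neg hnot, dif_pos htfin]
        exact htfin.choose_spec
      have heq : (((h * t) • X \ Xᶜ) ∪ (Xᶜ \ (h * t) • X))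
          = h • ((t • X \ Xᶜ) ∪ (Xᶜ \ t • X)) := by
        rw [mul_smul, ← sd_smul_eq h (t • X) Xᶜ, Set.smul_set_compl, hXinv h hh]
      rw [heq]
      exact (smul_subset_of_subset hh hFFt).trans
        (Set.mul_subset_mul_left (Finset.coe_subset.2 (Finset.subset_biUnion_of_mem FF ht)))
  -- goodness is 𝒦-invariant
  have hGoodInv : ∀ k, k ∈ 𝒦 → ∀ x : G, GoodPt 𝒦 𝒦₀ X x → GoodPt 𝒦 𝒦₀ X (k * x) := by
    intro k hk x hx
    have hxk : ∀ m : G, (k * x ∈ m • X ↔ x ∈ (k⁻¹ * m) • X) := by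
      intro m
      rw [hms, hms, mul_inv_rev, inv_inv, ← mul_assoc]
    have hxX : (k * x ∈ X) ↔ x ∈ k⁻¹ • X := by rw [hms, inv_inv]
    constructor
    · intro m hm
      rw [hxk m, hxX]
      by_cases hk0 : k ∈ 𝒦₀
      · have h1 : x ∈ (k⁻¹ * m) • X ↔ x ∈ X := hx.1 _ (mul_mem (inv_mem hk0) hm)
        have h2 : x ∈ k⁻¹ • X ↔ x ∈ X := hx.1 _ (inv_mem hk0)
        clear * - h1 h2
        tauto
      · have hki : k⁻¹ ∉ 𝒦₀ := fun hc => hk0 (by simpa using inv_mem hc)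
        have hm1 : k⁻¹ * m ∈ 𝒦 := mul_mem (inv_mem hk) (h𝒦₀𝒦 hm)
        have hm2 : k⁻¹ * m ∉ 𝒦₀ := by
          intro hc
          exact hki (by simpa using mul_mem hc (inv_mem hm))
        have h1 : x ∈ (k⁻¹ * m) • X ↔ x ∉ X := hx.2 _ hm1 hm2
        have h2 : x ∈ k⁻¹ • X ↔ x ∉ X := hx.2 _ (inv_mem hk) hki
        clear * - h1 h2
        tauto
    · intro m hm hm0
      rw [hxk m, hxX]
      by_cases hk0 : k ∈ 𝒦₀
      · have hm1 : k⁻¹ * m ∈ 𝒦 := mul_mem (inv_mem (h𝒦₀𝒦 hk0)) hm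
        have hm2 : k⁻¹ * m ∉ 𝒦₀ := fun hc => hm0 (by simpa using mul_mem hk0 hc)
        have h1 : x ∈ (k⁻¹ * m) • X ↔ x ∉ X := hx.2 _ hm1 hm2
        have h2 : x ∈ k⁻¹ • X ↔ x ∈ X := hx.1 _ (inv_mem hk0)
        clear * - h1 h2
        tauto
      · have hki : k⁻¹ ∉ 𝒦₀ := fun hc => hk0 (by simpa using inv_mem hc)
        have hm2 : k⁻¹ * m ∈ 𝒦₀ := hI2 k⁻¹ (inv_mem hk) m hm hki hm0
        have h1 : x ∈ (k⁻¹ * m) • X ↔ x ∈ X := hx.1 _ hm2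
        have h2 : x ∈ k⁻¹ • X ↔ x ∉ X := hx.2 _ (inv_mem hk) hki
        clear * - h1 h2
        tauto
  -- the pattern
  have hpat0 : ∀ k ∈ 𝒦₀, ∀ x : G, (patPt 𝒦 𝒦₀ (k * x) ↔ patPt 𝒦 𝒦₀ x) := by
    intro k hk x
    show k * x * (orbRep 𝒦 (k * x))⁻¹ ∈ 𝒦₀ ↔ x * (orbRep 𝒦 x)⁻¹ ∈ 𝒦₀
    rw [orbRep_smul 𝒦 (h𝒦₀𝒦 hk) x, mul_assoc]
    exact hpar0 k hk _
  have hpat1 : ∀ k ∈ 𝒦, k ∉ 𝒦₀ → ∀ x : G, (patPt 𝒦 𝒦₀ (k * x) ↔ ¬ patPt 𝒦 𝒦₀ x) := by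
    intro k hk hk0 x
    show k * x * (orbRep 𝒦 (k * x))⁻¹ ∈ 𝒦₀ ↔ ¬ (x * (orbRep 𝒦 x)⁻¹ ∈ 𝒦₀)
    rw [orbRep_smul 𝒦 hk x, mul_assoc]
    exact hpar k hk _ (orbRep_rel 𝒦 x) hk0
  set W : Set G := Wset 𝒦 𝒦₀ X with hWdef
  have hWmem : ∀ x : G, x ∈ W ↔
      ((GoodPt 𝒦 𝒦₀ X x ∧ x ∈ X) ∨ (¬ GoodPt 𝒦 𝒦₀ X x ∧ patPt 𝒦 𝒦₀ x)) := fun x => Iff.rfl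
  -- exact equivariance
  have hGiff : ∀ k ∈ 𝒦, ∀ x : G, (GoodPt 𝒦 𝒦₀ X (k⁻¹ * x) ↔ GoodPt 𝒦 𝒦₀ X x) := by
    intro k hk x
    constructor
    · intro h
      have := hGoodInv k hk _ h
      rwa [mul_inv_cancel_left] at this
    · exact hGoodInv k⁻¹ (inv_mem hk) x
  have hW0 : ∀ k ∈ 𝒦₀, k • W = W := by
    intro k hk
    ext x
    rw [hms, hWmem, hWmem]
    have hG1 : GoodPt 𝒦 𝒦₀ X (k⁻¹ * x) ↔ GoodPt 𝒦 𝒦₀ X x := hGiff k (h𝒦₀𝒦 hk) x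
    have hp1 : patPt 𝒦 𝒦₀ (k⁻¹ * x) ↔ patPt 𝒦 𝒦₀ x := hpat0 k⁻¹ (inv_mem hk) x
    exact prop_aux1 hG1 hp1 (fun hg => by rw [← hms]; exact hg.1 k hk)
  have hW1 : ∀ k ∈ 𝒦, k ∉ 𝒦₀ → k • W = Wᶜ := by
    intro k hk hk0
    have hki : k⁻¹ ∉ 𝒦₀ := fun hc => hk0 (by simpa using inv_mem hc)
    ext x
    rw [hms, Set.mem_compl_iff, hWmem, hWmem]
    have hG1 : GoodPt 𝒦 𝒦₀ X (k⁻¹ * x) ↔ GoodPt 𝒦 𝒦₀ X x := hGiff k hk x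
    have hp1 : patPt 𝒦 𝒦₀ (k⁻¹ * x) ↔ ¬ patPt 𝒦 𝒦₀ x := hpat1 k⁻¹ (inv_mem hk) hki x
    exact prop_aux2 hG1 hp1 (fun hg => by rw [← hms]; exact hg.2 k hk hk0)
  -- W is equivalent to X
  have hXW : (X \ W ∪ W \ X) ⊆ (H : Set G) * (FA : Set G) := by
    intro x hx
    have hng : ¬ GoodPt 𝒦 𝒦₀ X x := by
      intro hg
      rcases hx with hx | hx
      · exact hx.2 ((hWmem x).2 (Or.inl ⟨hg, hx.1⟩))
      · rcases (hWmem x).1 hx.1 with ⟨_, hxX⟩ | ⟨hng, _⟩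
        · exact hx.2 hxX
        · exact hng hg
    rw [GoodPt, not_and_or] at hng
    rcases hng with hng | hng
    · push_neg at hng
      obtain ⟨k, hk, hkiff⟩ := hng
      have hx' : x ∈ (k • X \ X ∪ X \ k • X) := by
        clear * - hkiff
        simp only [Set.mem_union, Set.mem_diff]
        tauto
      exact hFA1 k hk hx'
    · push_neg at hng
      obtain ⟨k, hk, hk0, hkiff⟩ := hng
      have hx' : x ∈ (k • X \ Xᶜ ∪ Xᶜ \ k • X) := by
        clear * - hkiff
        simp only [Set.mem_union, Set.mem_diff, Set.mem_compl_iff]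
        tauto
      exact hFA2 k hk hk0 hx'
  have hXWfin : HFin H (X \ W ∪ W \ X) := ⟨FA, hXW⟩
  -- right translates
  have hWa : ∀ a : G, HFin H ((W \ (· * a) '' W) ∪ ((· * a) '' W \ W)) := by
    intro a
    have hsub : (W \ (· * a) '' W) ∪ ((· * a) '' W \ W) ⊆
        ((X \ W ∪ W \ X) ∪ ((· * a) '' (X \ W ∪ W \ X))) ∪ (X \ (· * a) '' X ∪ (· * a) '' X \ X) := by
      intro x hx
      have h1 : x ∈ (· * a) '' W ↔ x * a⁻¹ ∈ W := mem_image_mul_right_iff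
      have h2 : x ∈ (· * a) '' X ↔ x * a⁻¹ ∈ X := mem_image_mul_right_iff
      have h3 : x ∈ (· * a) '' (X \ W ∪ W \ X) ↔ x * a⁻¹ ∈ (X \ W ∪ W \ X) :=
        mem_image_mul_right_iff
      clear * - hx h1 h2 h3
      simp only [Set.mem_union, Set.mem_diff] at hx h1 h2 h3 ⊢
      tauto
    exact hfin_mono
      (hfin_union (hfin_union hXWfin (hfin_image_mul_right a hXWfin)) (hXbd a)) hsub
  have hWai : AlmostInv 𝒦₀ W := ⟨fun h hh => hW0 h hh, fun a => hfin_of_le hHle (hWa a)⟩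
  -- nonemptiness
  have hWne : W.Nonempty := by
    rw [Set.nonempty_iff_ne_empty]
    intro hE
    apply hXnf
    refine hfin_mono hXWfin ?_
    intro x hx
    exact Or.inl ⟨hx, by simp [hE]⟩
  have hWcne : Wᶜ.Nonempty := by
    rw [Set.nonempty_iff_ne_empty]
    intro hE
    have hWuniv : W = Set.univ := by
      rw [← compl_compl W, hE, Set.compl_empty]
    apply hXcnf
    refine hfin_mono hXWfin ?_
    intro x hx
    exact Or.inr ⟨by simp [hWuniv], hx⟩
  -- the stabiliser is exactly 𝒦₀
  have hstab : ∀ g : G, g • W = W → g ∈ 𝒦₀ := by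
    intro g hgW
    obtain ⟨S, hS⟩ := hG.out
    set SS : Finset G := S ∪ S.image (·⁻¹) with hSS
    have hBfin : HFin H (⋃ s ∈ SS, (W \ (· * s⁻¹) '' W)) :=
      hfin_biUnion SS _ (fun s _ => hfin_mono (hWa s⁻¹) Set.subset_union_left)
    obtain ⟨FB, hFB⟩ := hBfin
    obtain ⟨w0, hw0⟩ := hWne
    obtain ⟨v0, hv0⟩ := hWcne
    obtain ⟨l, hl, hlp⟩ := exists_word_s18 hS (w0⁻¹ * v0)
    have walk : ∀ (l : List G), (∀ x ∈ l, x ∈ S ∨ x⁻¹ ∈ S) → ∀ w : G, w ∈ W →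
        w * l.prod ∉ W → ∃ x s : G, x ∈ W ∧ (s ∈ S ∨ s⁻¹ ∈ S) ∧ x * s ∉ W := by
      intro l
      induction l with
      | nil =>
        intro _ w hw hnw
        exact absurd (by simpa using hw) hnw
      | cons s l ih =>
        intro hmem w hw hnw
        by_cases hws : w * s ∈ W
        · refine ih (fun x hx => hmem x (List.mem_cons_of_mem s hx)) (w * s) hws ?_
          rwa [mul_assoc, ← List.prod_cons]
        · exact ⟨w, s, hw, hmem s List.mem_cons_self, hws⟩
    obtain ⟨x0, s0, hx0W, hs0, hx0s0⟩ := walk l hl w0 hw0 (by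
      rw [hlp, mul_inv_cancel_left]
      exact hv0)
    have hx0B : ∀ u : G, u ∈ W → u * s0 ∉ W → u ∈ (H : Set G) * (FB : Set G) := by
      intro u hu hus
      apply hFB
      have hs0' : s0 ∈ SS := by
        rcases hs0 with h | h
        · exact Finset.mem_union_left _ h
        · exact Finset.mem_union_right _ (Finset.mem_image.2 ⟨s0⁻¹, h, inv_inv s0⟩)
      refine Set.mem_iUnion₂.2 ⟨s0, hs0', ⟨hu, ?_⟩⟩
      intro hc
      apply hus
      have := mem_image_mul_right_iff.1 hc
      rwa [inv_inv] at this
    have key : ∀ h ∈ H, g * h * x0 ∈ (H : Set G) * (FB : Set G) := by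
      intro h hh
      have hghW : (g * h) • W = W := by
        rw [mul_smul, hW0 h (hH𝒦₀ h hh), hgW]
      have e1 : (g * h)⁻¹ * (g * h * x0) = x0 := by group
      have e2 : (g * h)⁻¹ * (g * h * x0 * s0) = x0 * s0 := by group
      apply hx0B
      · rw [← hghW, hms, e1]
        exact hx0W
      · intro hc
        apply hx0s0
        rw [← hghW, hms, e2] at hc
        exact hc
    have hgX : AIEquiv H (g • X) X := by
      have hsub : ((g • X) \ X ∪ X \ (g • X)) ⊆
          (X \ W ∪ W \ X) ∪ g • (X \ W ∪ W \ X) := by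
        intro x hx
        have h1 : x ∈ g • X ↔ g⁻¹ * x ∈ X := hms g X x
        have h2 : x ∈ g • (X \ W ∪ W \ X) ↔ g⁻¹ * x ∈ (X \ W ∪ W \ X) := hms g _ x
        have h3 : x ∈ W ↔ g⁻¹ * x ∈ W := by
          conv_lhs => rw [← hgW]
          exact hms g W x
        clear * - hx h1 h2 h3
        simp only [Set.mem_union, Set.mem_diff] at hx h1 h2 h3 ⊢
        tauto
      have hgfin : HFin H (g • (X \ W ∪ W \ X)) := by
        refine ⟨FB * {x0⁻¹} * FA, ?_⟩
        intro x hx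
        obtain ⟨y, hy, rfl⟩ := Set.mem_smul_set.1 hx
        obtain ⟨h1, hh1, f, hf, rfl⟩ := Set.mem_mul.1 (hXW hy)
        obtain ⟨h2, hh2, fbx, hfbx, hfbe⟩ := Set.mem_mul.1 (key h1 (SetLike.mem_coe.1 hh1))
        have heq : g • (h1 * f) = h2 * (fbx * x0⁻¹ * f) := by
          rw [smul_eq_mul]
          have e3 : g * h1 = h2 * fbx * x0⁻¹ := by
            rw [hfbe]
            group
          rw [← mul_assoc, e3]
          group
        rw [heq]
        refine Set.mul_mem_mul hh2 ?_
        rw [Finset.coe_mul, Finset.coe_mul]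
        exact Set.mul_mem_mul (Set.mul_mem_mul hfbx (by simp)) hf
      exact hfin_mono (hfin_union hXWfin hgfin) hsub
    exact (hmem𝒦₀ g).2 hgX
  refine ⟨W, hWai, ?_, ⟨FA, hXW⟩, ?_⟩
  · ext g
    simp only [Set.mem_setOf_eq, SetLike.mem_coe]
    exact ⟨hstab g, fun hg => hW0 g hg⟩
  · intro k hk
    by_cases hk0 : k ∈ 𝒦₀
    · right; left
      rw [hW0 k hk0]
      exact Set.inter_compl_self W
    · left
      rw [hW1 k hk hk0]
      exact Set.inter_compl_self W
end
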